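/- arXiv:1710.00697 — 5 statements merged into one kernel-verified Lean document; each statement's English description precedes it below -/
import Mathlib

section
/- Let (V, σ) be a finite-dimensional symplectic K-vector space, char K ≠ 2, and let f : V → V be a self-adjoint operator. Write the characteristic polynomial of f as P_f(t) = ∏ᵢ₌₁ʳ Pᵢ(t)^{mᵢ} with P₁, …, Pᵣ monic irreducible pairwise distinct. Then V decomposes as the direct sum V = V₁ ⊕ … ⊕ Vᵣ, where each Vᵢ = ker(Pᵢ(f)^{mᵢ}) is an f-invariant symplectic subspace of V. -/
def sympOrth {K V : Type*} [Field K] [AddCommGroup V] [Module K V]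
    (σ : LinearMap.BilinForm K V) (W : Submodule K V) : Submodule K V where
  carrier := {v | ∀ w ∈ W, σ v w = 0}
  add_mem' := by intro a b ha hb w hw; simp [ha w hw, hb w hw]
  zero_mem' := by intro w hw; simp
  smul_mem' := by intro c a ha w hw; simp [ha w hw]

def IsSymplecticSubspace {K V : Type*} [Field K] [AddCommGroup V] [Module K V]
    (σ : LinearMap.BilinForm K V) (W : Submodule K V) : Prop :=
  ∀ v ∈ W, (∀ w ∈ W, σ v w = 0) → v = 0

open Polynomial

lemma ker_aeval_finset_prod {K V : Type*} [Field K] [AddCommGroup V] [Module K V]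
    (f : Module.End K V) {ι : Type*} [DecidableEq ι] (s : Finset ι) (p : ι → K[X])
    (hcop : ∀ i ∈ s, ∀ j ∈ s, i ≠ j → IsCoprime (p i) (p j)) :
    LinearMap.ker (aeval f (∏ i ∈ s, p i)) = ⨆ i ∈ s, LinearMap.ker (aeval f (p i)) := by
  induction s using Finset.induction with
  | empty => simp [Module.End.one_eq_id]
  | @insert a s ha ih =>
    rw [Finset.prod_insert ha]
    have hc : IsCoprime (p a) (∏ i ∈ s, p i) := by
      apply IsCoprime.prod_right
      intro i hi
      exact hcop a (Finset.mem_insert_self a s) i (Finset.mem_insert_of_mem hi)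
        (fun h => ha (h ▸ hi))
    rw [← Polynomial.sup_ker_aeval_eq_ker_aeval_mul_of_coprime f hc,
      ih (fun i hi j hj hij => hcop i (Finset.mem_insert_of_mem hi) j
        (Finset.mem_insert_of_mem hj) hij)]
    rw [Finset.iSup_insert]

theorem primary_decomposition_symplectic
    {K V : Type*} [Field K] [AddCommGroup V] [Module K V] [FiniteDimensional K V]
    (hchar : (2 : K) ≠ 0)
    (σ : LinearMap.BilinForm K V) (halt : ∀ v, σ v v = 0) (hnd : σ.Nondegenerate)
    (f : Module.End K V) (hsa : ∀ v w, σ v (f w) = σ (f v) w)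
    (r : ℕ) (P : Fin r → Polynomial K) (m : Fin r → ℕ)
    (hmonic : ∀ i, (P i).Monic) (hirr : ∀ i, Irreducible (P i))
    (hne : ∀ i j, i ≠ j → P i ≠ P j) (hm : ∀ i, 0 < m i)
    (hfact : LinearMap.charpoly f = ∏ i, P i ^ m i) :
    DirectSum.IsInternal (fun i => LinearMap.ker (Polynomial.aeval f (P i ^ m i))) ∧
    (∀ i, ∀ v ∈ LinearMap.ker (Polynomial.aeval f (P i ^ m i)),
        f v ∈ LinearMap.ker (Polynomial.aeval f (P i ^ m i))) ∧
    (∀ i, IsSymplecticSubspace σ (LinearMap.ker (Polynomial.aeval f (P i ^ m i)))) := by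
  set W : Fin r → Submodule K V := fun i => LinearMap.ker (aeval f (P i ^ m i)) with hW
  -- pairwise coprimality
  have hcop : ∀ i j : Fin r, i ≠ j → IsCoprime (P i ^ m i) (P j ^ m j) := by
    intro i j hij
    refine IsCoprime.pow ?_
    rcases (hirr i).isCoprime_or_dvd (P j) with h | h
    · exact h
    · exact absurd (Polynomial.eq_of_monic_of_associated (hmonic i) (hmonic j)
        ((hirr i).associated_of_dvd (hirr j) h)) (hne i j hij)
  -- self-adjointness for polynomials in f
  have hpow : ∀ (n : ℕ) (v w : V), σ v ((f ^ n) w) = σ ((f ^ n) v) w := by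
    intro n
    induction n with
    | zero => intro v w; simp
    | succ n ih =>
      intro v w
      rw [pow_succ, Module.End.mul_apply, Module.End.mul_apply, ih, hsa,
        ← Module.End.mul_apply, ← pow_succ', pow_succ, Module.End.mul_apply]
  have hpoly : ∀ (p : K[X]) (v w : V), σ v (aeval f p w) = σ (aeval f p v) w := by
    intro p
    induction p using Polynomial.induction_on' with
    | add p q hp hq => intro v w; simp only [map_add, LinearMap.add_apply, map_add,
        LinearMap.map_add₂, hp, hq]
    | monomial n a =>
      intro v w
      simp only [aeval_monomial, Module.End.mul_apply, Module.algebraMap_end_apply,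
        map_smul, LinearMap.smul_apply, LinearMap.map_smul₂, LinearMap.smul_apply, hpow]
  -- iSup = top
  have hsup : ⨆ i, W i = ⊤ := by
    have h1 : LinearMap.ker (aeval f (∏ i, P i ^ m i)) = ⨆ i ∈ Finset.univ, W i :=
      ker_aeval_finset_prod f Finset.univ (fun i => P i ^ m i)
        (fun i _ j _ hij => hcop i j hij)
    rw [← hfact] at h1
    have h2 : aeval f (LinearMap.charpoly f) = 0 := LinearMap.aeval_self_charpoly f
    rw [h2, LinearMap.ker_zero] at h1
    simpa using h1.symm
  -- independence
  have hindep : iSupIndep W := by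
    intro i
    have h1 : ⨆ j ∈ Finset.univ.erase i, W j
        = LinearMap.ker (aeval f (∏ j ∈ Finset.univ.erase i, P j ^ m j)) :=
      (ker_aeval_finset_prod f _ (fun j => P j ^ m j)
        (fun a _ b _ hab => hcop a b hab)).symm
    have hc : IsCoprime (P i ^ m i) (∏ j ∈ Finset.univ.erase i, P j ^ m j) :=
      IsCoprime.prod_right fun j hj => hcop i j (Finset.ne_of_mem_erase hj).symm
    have hd := Polynomial.disjoint_ker_aeval_of_isCoprime f hc
    refine Disjoint.mono_right ?_ hd
    rw [← h1]
    refine iSup_le fun j => iSup_le fun hj => ?_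
    exact le_iSup_of_le j (le_iSup_of_le (Finset.mem_erase.mpr ⟨hj, Finset.mem_univ j⟩) le_rfl)
  -- orthogonality between distinct pieces
  have horth : ∀ i j : Fin r, i ≠ j → ∀ v ∈ W i, ∀ w ∈ W j, σ v w = 0 := by
    intro i j hij v hv w hw
    obtain ⟨a, b, hab⟩ := hcop i j hij
    have h1 : aeval f (b * P j ^ m j) w = 0 := by
      rw [aeval_mul, Module.End.mul_apply, LinearMap.mem_ker.mp hw, map_zero]
    have h2 : aeval f (a * P i ^ m i) v = 0 := by
      rw [aeval_mul, Module.End.mul_apply, LinearMap.mem_ker.mp hv, map_zero]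
    calc σ v w = σ v (aeval f (a * P i ^ m i + b * P j ^ m j) w) := by rw [hab]; simp
      _ = σ v (aeval f (a * P i ^ m i) w) + σ v (aeval f (b * P j ^ m j) w) := by
          rw [map_add, LinearMap.add_apply, map_add]
      _ = 0 := by rw [h1, map_zero, add_zero, hpoly, h2]; simp
  refine ⟨?_, ?_, ?_⟩
  · exact DirectSum.isInternal_submodule_of_iSupIndep_of_iSup_eq_top hindep hsup
  · intro i v hv
    rw [LinearMap.mem_ker] at hv ⊢
    have : aeval f (P i ^ m i) (f v) = f (aeval f (P i ^ m i) v) := by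
      have hcomm : aeval f (P i ^ m i * X) = aeval f (X * P i ^ m i) := by
        rw [mul_comm]
      have := congrArg (fun g => g v) hcomm
      simpa [aeval_mul, Module.End.mul_apply] using this
    rw [this, hv, map_zero]
  · intro i v hv hv0
    refine hnd.1 v fun u => ?_
    have hu : u ∈ ⨆ j, W j := by rw [hsup]; trivial
    induction hu using Submodule.iSup_induction' with
    | mem j x hx =>
      by_cases hji : j = i
      · exact hv0 x (hji ▸ hx)
      · exact horth i j (fun h => hji h.symm) v hv x hx
    | zero => simp
    | add x _ y _ hx hy => rw [map_add, hx, hy, add_zero]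
end

section
/- Let (V, σ) be a finite-dimensional symplectic K-vector space, char K ≠ 2, and f : V → V a nilpotent self-adjoint operator with nilpotency degree d (f^d = 0, f^{d−1} ≠ 0). Then for any f-cyclic subspace U ⊆ V with dim(U) = d, there exists an f-cyclic subspace W ⊆ V with dim(W) = d such that U ∩ W = {0} and U ⊕ W is a symplectic subspace of V. Moreover there is a Darboux basis {u₁,…,u_d, w₁,…,w_d} of U ⊕ W with u's spanning U and w's spanning W, satisfying uᵢ = f^{d−i}(u_d) and wᵢ = f^{i−1}(w₁). -/
theorem cyclic_subspace_symplectic_complement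
    {K V : Type*} [Field K] [AddCommGroup V] [Module K V] [FiniteDimensional K V]
    (hchar : (2 : K) ≠ 0)
    (σ : LinearMap.BilinForm K V) (halt : ∀ v, σ v v = 0) (hnd : σ.Nondegenerate)
    (f : Module.End K V) (hsa : ∀ v w, σ v (f w) = σ (f v) w)
    (d : ℕ) (hd : 0 < d) (hfd : f ^ d = 0) (hfd' : f ^ (d - 1) ≠ 0)
    (u : V) (U : Submodule K V)
    (hU : U = Submodule.span K (Set.range fun i : ℕ => (f ^ i) u))
    (hdimU : Module.finrank K U = d) :
    ∃ w₀ : V, ∃ W : Submodule K V,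
      W = Submodule.span K (Set.range fun i : ℕ => (f ^ i) w₀) ∧
      Module.finrank K W = d ∧
      U ⊓ W = ⊥ ∧
      IsSymplecticSubspace σ (U ⊔ W) ∧
      (∀ i j : Fin d,
        σ ((f ^ (d - 1 - (i : ℕ))) u) ((f ^ (d - 1 - (j : ℕ))) u) = 0) ∧
      (∀ i j : Fin d, σ ((f ^ (i : ℕ)) w₀) ((f ^ (j : ℕ)) w₀) = 0) ∧
      (∀ i j : Fin d,
        σ ((f ^ (i : ℕ)) w₀) ((f ^ (d - 1 - (j : ℕ))) u) = if i = j then 1 else 0) := by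
  classical
  -- antisymmetry
  have hanti : ∀ x y : V, σ x y = -σ y x := by
    intro x y
    have h := halt (x + y)
    simp only [map_add, LinearMap.add_apply, halt] at h
    linear_combination h
  -- move powers of f across σ
  have hmove : ∀ (a : ℕ) (x y : V), σ ((f ^ a) x) y = σ x ((f ^ a) y) := by
    intro a
    induction a with
    | zero => intro x y; simp
    | succ n ih =>
      intro x y
      have h1 : (f ^ (n + 1)) x = (f ^ n) (f x) := by
        rw [pow_succ]; rfl
      have h2 : (f ^ (n + 1)) y = f ((f ^ n) y) := by
        rw [pow_succ']; rfl
      rw [h1, ih (f x) y, ← hsa, h2]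
  -- σ vanishes on the f-orbit of a single vector
  have hself : ∀ (x : V) (a b : ℕ), σ ((f ^ a) x) ((f ^ b) x) = 0 := by
    intro x a b
    rw [hmove a]
    have h1 : (f ^ a) ((f ^ b) x) = (f ^ (a + b)) x := by
      rw [pow_add]; rfl
    rw [h1]
    set t := σ x ((f ^ (a + b)) x) with ht
    have h2 : t = -t := by
      rw [ht]
      nth_rewrite 1 [← hmove (a + b) x x]
      rw [hanti]
    have h3 : (2 : K) * t = 0 := by linear_combination h2
    rcases mul_eq_zero.1 h3 with h | h
    · exact absurd h hchar
    · exact h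
  -- f^i v = 0 for i ≥ d
  have hzero : ∀ (x : V) (i : ℕ), d ≤ i → (f ^ i) x = 0 := by
    intro x i hi
    have : f ^ i = f ^ (i - d) * f ^ d := by rw [← pow_add]; congr 1; omega
    rw [this, Module.End.mul_apply, hfd]
    simp
  -- the ℕ-indexed span equals the Fin d-indexed span
  have hspan : ∀ x : V, Submodule.span K (Set.range fun i : ℕ => (f ^ i) x) =
      Submodule.span K (Set.range fun i : Fin d => (f ^ (i : ℕ)) x) := by
    intro x
    apply le_antisymm
    · rw [Submodule.span_le]
      rintro _ ⟨i, rfl⟩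
      by_cases hi : i < d
      · exact Submodule.subset_span ⟨⟨i, hi⟩, rfl⟩
      · simp only
        rw [hzero x i (by omega)]
        exact Submodule.zero_mem _
    · rw [Submodule.span_le]
      rintro _ ⟨i, rfl⟩
      exact Submodule.subset_span ⟨(i : ℕ), rfl⟩
  set g : Fin d → V := fun i => (f ^ (i : ℕ)) u with hg
  have hUg : U = Submodule.span K (Set.range g) := by rw [hU, hspan]
  have li : LinearIndependent K g := by
    apply linearIndependent_iff_card_eq_finrank_span.2
    rw [Fintype.card_fin]
    rw [hUg] at hdimU
    exact hdimU.symm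
  set last : Fin d := ⟨d - 1, by omega⟩ with hlast
  -- the dual functional ψ with ψ (g k) = δ_{k,last}
  obtain ⟨ψ, hψ⟩ := ((Module.Basis.span li).coord last).exists_extend
  have hψg : ∀ k : Fin d, ψ (g k) = if k = last then 1 else 0 := by
    intro k
    have hm : g k ∈ Submodule.span K (Set.range g) :=
      Submodule.subset_span (Set.mem_range_self k)
    have h1 : ψ (g k) = (Module.Basis.span li).coord last ⟨g k, hm⟩ := by rw [← hψ]; rfl
    have h2 : (⟨g k, hm⟩ : Submodule.span K (Set.range g)) = Module.Basis.span li k :=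
      Subtype.ext (by rw [Module.Basis.span_apply])
    rw [h1, h2, Module.Basis.coord_apply, Module.Basis.repr_self, Finsupp.single_apply]
  set w₀ : V := (σ.toDual hnd).symm ψ with hw₀
  have hw : ∀ x : V, σ w₀ x = ψ x := fun x =>
    LinearMap.BilinForm.apply_toDual_symm_apply ψ x
  -- the key pairing
  have hpair : ∀ a b : ℕ, σ ((f ^ a) w₀) ((f ^ b) u) = if a + b = d - 1 then 1 else 0 := by
    intro a b
    have h1 : (f ^ a) ((f ^ b) u) = (f ^ (a + b)) u := by rw [pow_add]; rfl
    rw [hmove a, h1, hw]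
    by_cases hab : a + b < d
    · have := hψg ⟨a + b, hab⟩
      simp only [hg] at this
      rw [this]
      simp only [hlast, Fin.mk.injEq]
    · rw [hzero u (a + b) (by omega), map_zero]
      rw [if_neg (by omega)]
  set ufam : Fin d → V := fun i => (f ^ (d - 1 - (i : ℕ))) u with hufam
  set wfam : Fin d → V := fun i => (f ^ (i : ℕ)) w₀ with hwfam
  have Pwu : ∀ i j : Fin d, σ (wfam i) (ufam j) = if i = j then 1 else 0 := by
    intro i j
    rw [hpair]
    congr 1
    simp only [eq_iff_iff, Fin.ext_iff]
    omega
  have Puu : ∀ i j : Fin d, σ (ufam i) (ufam j) = 0 := fun i j => hself u _ _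
  have Pww : ∀ i j : Fin d, σ (wfam i) (wfam j) = 0 := fun i j => hself w₀ _ _
  have Puw : ∀ i j : Fin d, σ (ufam i) (wfam j) = -(if j = i then 1 else 0) := by
    intro i j
    rw [hanti, Pwu]
  -- expand σ on sums
  have hexp : ∀ (c : Fin d → K) (vv : Fin d → V) (z : V),
      σ (∑ i, c i • vv i) z = ∑ i, c i * σ (vv i) z := by
    intro c vv z
    rw [map_sum, LinearMap.sum_apply]
    congr 1; funext i
    rw [map_smul, LinearMap.smul_apply, smul_eq_mul]
  have li_w : LinearIndependent K wfam := by
    rw [Fintype.linearIndependent_iff]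
    intro c hc j
    have := congrArg (fun z => σ z (ufam j)) hc
    simp only [map_zero, LinearMap.zero_apply] at this
    rw [hexp] at this
    simp only [Pwu, mul_ite, mul_one, mul_zero, Finset.sum_ite_eq', Finset.mem_univ,
      if_true] at this
    exact this
  set W : Submodule K V := Submodule.span K (Set.range fun i : ℕ => (f ^ i) w₀) with hWdef
  have hWg : W = Submodule.span K (Set.range wfam) := by rw [hWdef, hspan]
  refine ⟨w₀, W, rfl, ?_, ?_, ?_, fun i j => Puu i j, fun i j => Pww i j, fun i j => Pwu i j⟩
  · -- finrank W = d
    rw [hWg, finrank_span_eq_card li_w, Fintype.card_fin]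
  · -- U ⊓ W = ⊥
    rw [eq_bot_iff]
    rintro v ⟨hvU, hvW⟩
    rw [hUg] at hvU
    rw [hWg] at hvW
    obtain ⟨a, ha⟩ := (Submodule.mem_span_range_iff_exists_fun K).1 hvU
    obtain ⟨b, hb⟩ := (Submodule.mem_span_range_iff_exists_fun K).1 hvW
    have hbz : ∀ j, b j = 0 := by
      intro j
      have h1 : σ v (ufam j) = 0 := by
        rw [← ha, hexp]
        have : ∀ i : Fin d, a i * σ (g i) (ufam j) = 0 := by
          intro i
          rw [show σ (g i) (ufam j) = 0 from hself u _ _, mul_zero]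
        simp [this]
      have h2 : σ v (ufam j) = b j := by
        rw [← hb, hexp]
        simp [Pwu]
      rw [h1] at h2
      exact h2.symm
    have : v = 0 := by
      rw [← hb]
      simp only [hbz, zero_smul, Finset.sum_const_zero]
    simpa using this
  · -- symplectic
    intro v hv hperp
    obtain ⟨x, hxU, y, hyW, hxy⟩ := Submodule.mem_sup.1 hv
    rw [hUg] at hxU
    rw [hWg] at hyW
    obtain ⟨a, ha⟩ := (Submodule.mem_span_range_iff_exists_fun K).1 hxU
    obtain ⟨b, hb⟩ := (Submodule.mem_span_range_iff_exists_fun K).1 hyW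
    have hufamU : ∀ j, ufam j ∈ U ⊔ W := by
      intro j
      apply Submodule.mem_sup_left
      rw [hU]
      exact Submodule.subset_span ⟨d - 1 - (j : ℕ), rfl⟩
    have hwfamW : ∀ j, wfam j ∈ U ⊔ W := by
      intro j
      apply Submodule.mem_sup_right
      rw [hWg]
      exact Submodule.subset_span (Set.mem_range_self j)
    have hbz : ∀ j, b j = 0 := by
      intro j
      have h0 := hperp (ufam j) (hufamU j)
      rw [← hxy, map_add, LinearMap.add_apply, ← ha, ← hb, hexp, hexp] at h0
      have hxpart : ∀ i : Fin d, a i * σ (g i) (ufam j) = 0 := by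
        intro i
        rw [show σ (g i) (ufam j) = 0 from hself u _ _, mul_zero]
      simp only [hxpart, Finset.sum_const_zero, zero_add] at h0
      simpa [Pwu] using h0
    have haz : ∀ j, a j = 0 := by
      intro j
      set j' : Fin d := ⟨d - 1 - (j : ℕ), by omega⟩ with hj'
      have h0 := hperp (wfam j') (hwfamW j')
      rw [← hxy, map_add, LinearMap.add_apply, ← ha, ← hb, hexp, hexp] at h0
      have hypart : ∀ i : Fin d, b i * σ (wfam i) (wfam j') = 0 := by
        intro i
        rw [Pww, mul_zero]
      simp only [hypart, Finset.sum_const_zero, add_zero] at h0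
      have hgw : ∀ i : Fin d, σ (g i) (wfam j') = -(if i = j then 1 else 0) := by
        intro i
        rw [hanti, hpair]
        have hi := i.isLt
        have hj := j.isLt
        have hiff : ((j' : ℕ) + (i : ℕ) = d - 1) ↔ (i = j) := by
          simp only [hj', Fin.ext_iff]
          omega
        exact congrArg Neg.neg (if_congr hiff rfl rfl)
      simp only [hgw, mul_neg, mul_ite, mul_one, mul_zero, Finset.sum_neg_distrib,
        Finset.sum_ite_eq', Finset.mem_univ, if_true, neg_eq_zero] at h0
      exact h0
    rw [← hxy, ← ha, ← hb]
    simp [haz, hbz]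
end

section
/- Let K be a field of characteristic ≠ 2, (V, σ) a symplectic K-vector space of dimension 2n, and f : V → V a nilpotent self-adjoint operator. Then there exists a Darboux basis {u₁,…,u_n, w₁,…,w_n} of V such that the matrix of f with respect to this basis is block-diagonal of the form [[B, 0],[0, Bᵀ]] for some n×n matrix B over K in Jordan normal form. -/
/-- A Darboux basis: `σ(uᵢ,uⱼ)=0`, `σ(wᵢ,wⱼ)=0`, `σ(wᵢ,uⱼ)=δᵢⱼ`, where
`uᵢ = b (Sum.inl i)` and `wᵢ = b (Sum.inr i)`. -/
def IsDarbouxBasis {K V : Type*} [Field K] [AddCommGroup V] [Module K V] {n : ℕ}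
    (σ : LinearMap.BilinForm K V) (b : Module.Basis (Fin n ⊕ Fin n) K V) : Prop :=
  (∀ i j, σ (b (Sum.inl i)) (b (Sum.inl j)) = 0) ∧
  (∀ i j, σ (b (Sum.inr i)) (b (Sum.inr j)) = 0) ∧
  (∀ i j, σ (b (Sum.inr i)) (b (Sum.inl j)) = if i = j then 1 else 0)

/-- A square matrix is in Jordan normal form: it vanishes off the diagonal and
superdiagonal, each superdiagonal entry is `0` or `1`, and a superdiagonal `1`
only links equal diagonal entries (i.e. it lies inside a Jordan block). -/
def IsJordanNormalForm {n : ℕ} {K : Type*} [Field K]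
    (B : Matrix (Fin n) (Fin n) K) : Prop :=
  (∀ i j : Fin n, (j : ℕ) ≠ (i : ℕ) → (j : ℕ) ≠ (i : ℕ) + 1 → B i j = 0) ∧
  (∀ i j : Fin n, (j : ℕ) = (i : ℕ) + 1 → B i j = 0 ∨ (B i j = 1 ∧ B i i = B j j))

open Module

section Prelim
variable {K : Type*} [Field K] {V : Type*} [AddCommGroup V] [Module K V]
variable {σ : LinearMap.BilinForm K V} {f : Module.End K V}

lemma sa_pow (hsa : ∀ v w, σ v (f w) = σ (f v) w) (k : ℕ) (v w : V) :
    σ ((f ^ k) v) w = σ v ((f ^ k) w) := by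
  induction k generalizing v w with
  | zero => simp
  | succ k ih =>
    have h1 : (f ^ (k + 1)) v = (f ^ k) (f v) := by
      rw [pow_succ]; rfl
    have h2 : (f ^ (k + 1)) w = f ((f ^ k) w) := by
      rw [pow_succ']; rfl
    rw [h1, h2, ih (f v) w, ← hsa]

lemma sa_shift (hsa : ∀ v w, σ v (f w) = σ (f v) w) (a b : ℕ) (v w : V) :
    σ ((f ^ a) v) ((f ^ b) w) = σ ((f ^ (a + b)) v) w := by
  rw [← sa_pow hsa b]
  rw [show (f ^ b) ((f ^ a) v) = (f ^ (a + b)) v by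
    rw [← Module.End.mul_apply, ← pow_add, add_comm b a]]

lemma alt_skew (halt : ∀ v, σ v v = 0) (v w : V) : σ v w = -σ w v :=
  (LinearMap.IsAlt.neg halt w v).symm

lemma pow_self_zero (hchar : (2 : K) ≠ 0) (halt : ∀ v, σ v v = 0)
    (hsa : ∀ v w, σ v (f w) = σ (f v) w) (k : ℕ) (v : V) :
    σ ((f ^ k) v) v = 0 := by
  rcases Nat.even_or_odd k with ⟨j, hj⟩ | ⟨j, hj⟩
  · subst hj
    rw [← sa_shift hsa j j]
    exact halt _
  · subst hj
    have h1 : σ ((f ^ (2 * j + 1)) v) v = σ ((f ^ (j + 1)) v) ((f ^ j) v) := by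
      rw [sa_shift hsa]; ring_nf
    have h2 : σ ((f ^ (j + 1)) v) ((f ^ j) v) = σ ((f ^ j) v) ((f ^ (j + 1)) v) := by
      have e1 : (f ^ (j + 1)) v = f ((f ^ j) v) := by rw [pow_succ']; rfl
      rw [e1, ← hsa]
    have h3 := alt_skew halt ((f ^ (j + 1)) v) ((f ^ j) v)
    have : (2 : K) * σ ((f ^ (2 * j + 1)) v) v = 0 := by
      rw [h1]
      rw [h3] at h2
      linear_combination 2 * h3 + h2
    rcases mul_eq_zero.mp this with h | h
    · exact absurd h hchar
    · exact h

lemma isotropic_pow (hchar : (2 : K) ≠ 0) (halt : ∀ v, σ v v = 0)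
    (hsa : ∀ v w, σ v (f w) = σ (f v) w) (i j : ℕ) (v : V) :
    σ ((f ^ i) v) ((f ^ j) v) = 0 := by
  rw [sa_shift hsa]
  exact pow_self_zero hchar halt hsa _ v

lemma toMatrix_eq_of {ι : Type*} [Fintype ι] [DecidableEq ι] (b : Basis ι K V)
    (M : Matrix ι ι K) (f : Module.End K V)
    (h : ∀ j, f (b j) = ∑ i, M i j • b i) :
    LinearMap.toMatrix b b f = M := by
  ext i j
  rw [LinearMap.toMatrix_apply, h j, b.repr_sum_self]

end Prelim

section JNF
variable {K : Type*} [Field K]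

lemma finSumFinEquiv_symm_eq_left {k l : ℕ} (i : Fin (k + l)) (h : (i : ℕ) < k) :
    finSumFinEquiv.symm i = Sum.inl ⟨(i : ℕ), h⟩ := by
  rw [Equiv.symm_apply_eq, finSumFinEquiv_apply_left]
  ext; simp

lemma finSumFinEquiv_symm_eq_right {k l : ℕ} (i : Fin (k + l)) (h : ¬ (i : ℕ) < k) :
    finSumFinEquiv.symm i = Sum.inr ⟨(i : ℕ) - k, by omega⟩ := by
  rw [Equiv.symm_apply_eq, finSumFinEquiv_apply_right]
  ext; simp; omega

/-- single nilpotent Jordan block -/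
lemma jnf_jordanBlock (k : ℕ) :
    IsJordanNormalForm (Matrix.of fun p q : Fin k =>
      if (q : ℕ) = (p : ℕ) + 1 then (1 : K) else 0) := by
  constructor
  · intro i j h1 h2
    simp only [Matrix.of_apply, if_neg h2]
  · intro i j h
    right
    constructor
    · simp [h]
    · simp [Matrix.of_apply]

lemma jnf_concat {k l n : ℕ} (h : k + l = n)
    {B₁ : Matrix (Fin k) (Fin k) K} {B₂ : Matrix (Fin l) (Fin l) K}
    (h₁ : IsJordanNormalForm B₁) (h₂ : IsJordanNormalForm B₂) :
    IsJordanNormalForm ((Matrix.fromBlocks B₁ 0 0 B₂).submatrix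
      (finSumFinEquiv.trans (finCongr h)).symm (finSumFinEquiv.trans (finCongr h)).symm) := by
  have key : ∀ i : Fin n, (finSumFinEquiv.trans (finCongr h)).symm i =
      finSumFinEquiv.symm (⟨(i : ℕ), by omega⟩ : Fin (k + l)) := by
    intro i; rfl
  constructor
  · intro i j hj1 hj2
    rw [Matrix.submatrix_apply, key, key]
    by_cases hi : (i : ℕ) < k <;> by_cases hjk : (j : ℕ) < k
    · rw [finSumFinEquiv_symm_eq_left _ hi, finSumFinEquiv_symm_eq_left _ hjk]
      exact h₁.1 _ _ (by simpa using hj1) (by simpa using hj2)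
    · rw [finSumFinEquiv_symm_eq_left _ hi, finSumFinEquiv_symm_eq_right _ hjk]
      simp
    · rw [finSumFinEquiv_symm_eq_right _ hi, finSumFinEquiv_symm_eq_left _ hjk]
      simp
    · rw [finSumFinEquiv_symm_eq_right _ hi, finSumFinEquiv_symm_eq_right _ hjk]
      exact h₂.1 _ _ (by simp; omega) (by simp; omega)
  · intro i j hj
    rw [Matrix.submatrix_apply, key, key]
    by_cases hi : (i : ℕ) < k
    · by_cases hjk : (j : ℕ) < k
      · rw [finSumFinEquiv_symm_eq_left _ hi, finSumFinEquiv_symm_eq_left _ hjk]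
        rcases h₁.2 ⟨i, hi⟩ ⟨j, hjk⟩ (by simpa using hj) with h0 | ⟨ha, hb⟩
        · exact Or.inl h0
        · refine Or.inr ⟨ha, ?_⟩
          rw [Matrix.submatrix_apply, Matrix.submatrix_apply, key, key,
            finSumFinEquiv_symm_eq_left _ hi, finSumFinEquiv_symm_eq_left _ hjk]
          exact hb
      · rw [finSumFinEquiv_symm_eq_left _ hi, finSumFinEquiv_symm_eq_right _ hjk]
        simp
    · have hjk : ¬ (j : ℕ) < k := by omega
      rw [finSumFinEquiv_symm_eq_right _ hi, finSumFinEquiv_symm_eq_right _ hjk]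
      rcases h₂.2 ⟨(i : ℕ) - k, by omega⟩ ⟨(j : ℕ) - k, by omega⟩ (by simp; omega)
        with h0 | ⟨ha, hb⟩
      · exact Or.inl h0
      · refine Or.inr ⟨ha, ?_⟩
        rw [Matrix.submatrix_apply, Matrix.submatrix_apply, key, key,
          finSumFinEquiv_symm_eq_right _ hi, finSumFinEquiv_symm_eq_right _ hjk]
        exact hb

end JNF

universe u v

theorem aux {K : Type u} [Field K] (hchar : (2 : K) ≠ 0) :
    ∀ (n : ℕ) (V : Type v) [AddCommGroup V] [Module K V] [FiniteDimensional K V],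
    Module.finrank K V = 2 * n →
    ∀ (σ : LinearMap.BilinForm K V), (∀ v, σ v v = 0) → σ.Nondegenerate →
    ∀ (f : Module.End K V), (∀ v w, σ v (f w) = σ (f v) w) → IsNilpotent f →
    ∃ b : Basis (Fin n ⊕ Fin n) K V, IsDarbouxBasis σ b ∧
      ∃ B : Matrix (Fin n) (Fin n) K, IsJordanNormalForm B ∧
        LinearMap.toMatrix b b f = Matrix.fromBlocks B 0 0 B.transpose := by
  intro n
  induction n using Nat.strong_induction_on with
  | _ n IH =>
  intro V _ _ _ hdim σ halt hnd f hsa hnil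
  by_cases hn0 : n = 0
  · subst hn0
    have hsub : Subsingleton V := by
      rw [← Module.finrank_zero_iff (R := K)]
      omega
    refine ⟨Basis.empty V, ⟨?_, ?_, ?_⟩, 0, ⟨?_, ?_⟩, ?_⟩
    · intro i; exact i.elim0
    · intro i; exact i.elim0
    · intro i; exact i.elim0
    · intro i; exact i.elim0
    · intro i; exact i.elim0
    · ext i j; rcases i with i | i <;> exact i.elim0
  -- main case
  have hnpos : 0 < n := Nat.pos_of_ne_zero hn0
  have : Nontrivial V := Module.nontrivial_of_finrank_pos (R := K) (by omega)
  -- the nilpotency exponent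
  have hex : ∃ k, f ^ k = 0 := hnil
  classical
  set N₀ := Nat.find hex with hN₀
  have hN₀pos : 0 < N₀ := by
    rcases Nat.eq_zero_or_pos N₀ with h | h
    · exfalso
      have := Nat.find_spec hex
      rw [← hN₀, h, pow_zero] at this
      obtain ⟨x, hx⟩ := exists_ne (0 : V)
      exact hx (by simpa using LinearMap.congr_fun this x)
    · exact h
  set m := N₀ - 1 with hm
  have hfm : f ^ m ≠ 0 := Nat.find_min hex (by omega)
  have hfm1 : f ^ (m + 1) = 0 := by
    have : m + 1 = N₀ := by omega
    rw [this]; exact Nat.find_spec hex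
  have hbig : ∀ k, m < k → f ^ k = 0 := by
    intro k hk
    have : f ^ k = f ^ (m + 1) * f ^ (k - (m + 1)) := by
      rw [← pow_add]; congr 1; omega
    rw [this, hfm1, zero_mul]
  -- find u, w₁
  have hu : ∃ u : V, (f ^ m) u ≠ 0 := by
    by_contra h
    push_neg at h
    exact hfm (LinearMap.ext fun x => h x)
  obtain ⟨u, hu⟩ := hu
  have hw₀ : ∃ w₀ : V, σ ((f ^ m) u) w₀ ≠ 0 := by
    by_contra h
    push_neg at h
    exact hu (hnd.1 _ h)
  obtain ⟨w₀, hw₀⟩ := hw₀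
  set w₁ := (σ ((f ^ m) u) w₀)⁻¹ • w₀ with hw₁def
  have hσw : σ ((f ^ m) u) w₁ = 1 := by
    rw [hw₁def, map_smul, smul_eq_mul, inv_mul_cancel₀ hw₀]
  -- correction recursion
  set g : ℕ → V := fun t => Nat.rec w₁
    (fun t gt => gt - σ ((f ^ (m - (t + 1))) u) gt • (f ^ (t + 1)) gt) t with hgdef
  have hgs : ∀ t, g (t + 1) = g t - σ ((f ^ (m - (t + 1))) u) (g t) • (f ^ (t + 1)) (g t) :=
    fun t => rfl
  have hKey : ∀ t, ∀ i, m - t ≤ i → σ ((f ^ i) u) (g t) = if i = m then 1 else 0 := by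
    intro t
    induction t with
    | zero =>
      intro i hi
      rcases eq_or_lt_of_le (by omega : m ≤ i) with h | h
      · rw [if_pos h.symm, ← h]; exact hσw
      · rw [if_neg (by omega), hbig i h]
        simp
    | succ t ih =>
      intro i hi
      rw [hgs t, map_sub, map_smul, smul_eq_mul]
      have hshift : σ ((f ^ i) u) ((f ^ (t + 1)) (g t)) = σ ((f ^ (i + (t + 1))) u) (g t) := by
        have := sa_pow hsa (t + 1) ((f ^ i) u) (g t)
        rw [← this]
        rw [show (f ^ (t+1)) ((f ^ i) u) = (f ^ (i + (t+1))) u by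
          rw [← Module.End.mul_apply, ← pow_add, add_comm (t+1) i]]
      rw [hshift]
      by_cases hcase : m - t ≤ i
      · rw [ih i hcase, ih (i + (t + 1)) (by omega)]
        rw [if_neg (by omega : ¬ i + (t + 1) = m)]
        ring
      · -- i = m - (t+1), t + 1 ≤ m
        have hi2 : i = m - (t + 1) := by omega
        have ht1 : t + 1 ≤ m := by omega
        have hsum : i + (t + 1) = m := by omega
        rw [hsum, ih m (by omega), if_pos rfl, hi2]
        rw [if_neg (by omega : ¬ m - (t + 1) = m)]
        ring
  set w' := g m with hw'def
  have hw' : ∀ i, σ ((f ^ i) u) w' = if i = m then 1 else 0 := fun i => hKey m i (by omega)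
  -- the 2(m+1) vectors
  set e : Fin (m + 1) ⊕ Fin (m + 1) → V :=
    Sum.elim (fun i => (f ^ (m - (i : ℕ))) u) (fun i => -((f ^ (i : ℕ)) w')) with hedef
  have he_uu : ∀ i j : Fin (m + 1), σ (e (Sum.inl i)) (e (Sum.inl j)) = 0 := by
    intro i j
    exact isotropic_pow hchar halt hsa _ _ u
  have he_ww : ∀ i j : Fin (m + 1), σ (e (Sum.inr i)) (e (Sum.inr j)) = 0 := by
    intro i j
    simp only [hedef, Sum.elim_inr, map_neg, LinearMap.neg_apply, neg_neg]
    exact isotropic_pow hchar halt hsa _ _ w'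
  have he_wu : ∀ i j : Fin (m + 1),
      σ (e (Sum.inr i)) (e (Sum.inl j)) = if i = j then 1 else 0 := by
    intro i j
    simp only [hedef, Sum.elim_inr, Sum.elim_inl, map_neg, LinearMap.neg_apply]
    rw [alt_skew halt ((f ^ (i : ℕ)) w') ((f ^ (m - (j : ℕ))) u), neg_neg,
      sa_shift hsa, hw']
    have h1 : (i : ℕ) ≤ m := by omega
    have h2 : (j : ℕ) ≤ m := by omega
    by_cases h : i = j
    · rw [if_pos h, if_pos (by subst h; omega)]
    · rw [if_neg h, if_neg (by
        intro hc
        exact h (Fin.ext (by omega)))]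
  have he_uw : ∀ i j : Fin (m + 1),
      σ (e (Sum.inl i)) (e (Sum.inr j)) = -(if j = i then 1 else 0) := by
    intro i j
    rw [alt_skew halt, he_wu]
  -- action of f on e
  have hfpow : ∀ (k : ℕ) (x : V), f ((f ^ k) x) = (f ^ (k + 1)) x := by
    intro k x
    rw [← Module.End.mul_apply, ← pow_succ']
  have hfu : ∀ i : Fin (m + 1), f (e (Sum.inl i)) =
      if h : (i : ℕ) = 0 then 0 else e (Sum.inl ⟨(i : ℕ) - 1, by omega⟩) := by
    intro i
    simp only [hedef, Sum.elim_inl]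
    rw [hfpow]
    by_cases h : (i : ℕ) = 0
    · rw [dif_pos h, h]
      have : m - 0 + 1 = m + 1 := by omega
      rw [this, hfm1]
      simp
    · rw [dif_neg h]
      have him : (i : ℕ) < m + 1 := i.isLt
      have : m - (i : ℕ) + 1 = m - ((i : ℕ) - 1) := by omega
      rw [this]
  have hfw : ∀ i : Fin (m + 1), f (e (Sum.inr i)) =
      if h : (i : ℕ) = m then 0 else e (Sum.inr ⟨(i : ℕ) + 1, by omega⟩) := by
    intro i
    simp only [hedef, Sum.elim_inr, map_neg]
    rw [hfpow]
    by_cases h : (i : ℕ) = m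
    · rw [dif_pos h, h, hfm1]
      simp
    · rw [dif_neg h]
  -- linear independence
  have hli : LinearIndependent K e := by
    rw [Fintype.linearIndependent_iff]
    intro c hc x
    have haux : ∀ a : V, σ a (∑ y, c y • e y) =
        (∑ i : Fin (m + 1), c (Sum.inl i) * σ a (e (Sum.inl i))) +
        (∑ i : Fin (m + 1), c (Sum.inr i) * σ a (e (Sum.inr i))) := by
      intro a
      rw [map_sum, Fintype.sum_sum_type]
      congr 1 <;> (apply Finset.sum_congr rfl; intro y _; rw [map_smul, smul_eq_mul])
    cases x with
    | inl i =>
      have h1 := congrArg (fun z => σ (e (Sum.inr i)) z) hc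
      simp only [map_zero] at h1
      rw [haux (e (Sum.inr i))] at h1
      simp only [he_wu, he_ww, mul_ite, mul_one, mul_zero, Finset.sum_const_zero,
        add_zero, Finset.sum_ite_eq, Finset.mem_univ, if_true] at h1
      exact h1
    | inr i =>
      have h1 := congrArg (fun z => σ (e (Sum.inl i)) z) hc
      simp only [map_zero] at h1
      rw [haux (e (Sum.inl i))] at h1
      simp only [he_uu, he_uw, mul_ite, mul_one, mul_zero, mul_neg, Finset.sum_const_zero,
        zero_add, Finset.sum_neg_distrib, Finset.sum_ite_eq', Finset.mem_univ, if_true,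
        neg_eq_zero] at h1
      exact h1
  -- the symplectic subspace W
  set W := Submodule.span K (Set.range e) with hWdef
  set bW : Basis (Fin (m + 1) ⊕ Fin (m + 1)) K W := Basis.span hli with hbWdef
  have hbW : ∀ x, (bW x : V) = e x := fun x => congrArg Subtype.val (Module.Basis.span_apply hli x)
  have hmemW : ∀ x, e x ∈ W := fun x => Submodule.subset_span ⟨x, rfl⟩
  have hexpand : ∀ x : W, (x : V) = ∑ y, bW.repr x y • e y := by
    intro x
    conv_lhs => rw [← bW.sum_repr x]
    push_cast
    simp only [hbW]
  have hWnd : (σ.restrict W).Nondegenerate := by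
    refine (LinearMap.IsRefl.nondegenerate_iff_separatingLeft
      (LinearMap.IsAlt.isRefl (fun x : W => halt (x : V)))).mpr ?_
    intro x hx
    have hxV : ∀ y, σ (x : V) (e y) = 0 := by
      intro y
      have := hx ⟨e y, hmemW y⟩
      simpa using this
    have hrep : ∀ y, bW.repr x y = 0 := by
      have hcalc : ∀ a : V, σ (x : V) a =
          (∑ i : Fin (m + 1), bW.repr x (Sum.inl i) * σ (e (Sum.inl i)) a) +
          (∑ i : Fin (m + 1), bW.repr x (Sum.inr i) * σ (e (Sum.inr i)) a) := by
        intro a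
        conv_lhs => rw [hexpand x]
        rw [map_sum, LinearMap.sum_apply, Fintype.sum_sum_type]
        congr 1
        · exact Finset.sum_congr rfl fun y _ => by
            rw [map_smul, LinearMap.smul_apply, smul_eq_mul]
        · exact Finset.sum_congr rfl fun y _ => by
            rw [map_smul, LinearMap.smul_apply, smul_eq_mul]
      intro y
      cases y with
      | inr j =>
        have h1 := hxV (Sum.inl j)
        rw [hcalc (e (Sum.inl j))] at h1
        simp only [he_uu, he_wu, mul_ite, mul_one, mul_zero, Finset.sum_const_zero,
          zero_add, Finset.sum_ite_eq', Finset.mem_univ, if_true] at h1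
        exact h1
      | inl j =>
        have h1 := hxV (Sum.inr j)
        rw [hcalc (e (Sum.inr j))] at h1
        simp only [he_ww, he_uw, mul_ite, mul_one, mul_zero, mul_neg, Finset.sum_const_zero,
          add_zero, Finset.sum_neg_distrib, Finset.sum_ite_eq, Finset.mem_univ, if_true,
          neg_eq_zero] at h1
        exact h1
    have : bW.repr x = 0 := by
      ext y; exact hrep y
    exact bW.repr.map_eq_zero_iff.mp this
  have hrefl : σ.IsRefl := LinearMap.IsAlt.isRefl halt
  have hcompl : IsCompl W (σ.orthogonal W) :=
    LinearMap.BilinForm.isCompl_orthogonal_of_restrict_nondegenerate hrefl hWnd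
  set Wσ := σ.orthogonal W with hWσdef
  have hWinv : ∀ x ∈ W, f x ∈ W := by
    have hmap : W.map f ≤ W := by
      rw [hWdef, Submodule.map_span, Submodule.span_le]
      rintro _ ⟨_, ⟨y, rfl⟩, rfl⟩
      cases y with
      | inl i =>
        rw [hfu i]
        split_ifs
        · exact Submodule.zero_mem W
        · exact hmemW _
      | inr i =>
        rw [hfw i]
        split_ifs
        · exact Submodule.zero_mem W
        · exact hmemW _
    intro x hx
    exact hmap (Submodule.mem_map_of_mem hx)
  have hWσinv : ∀ x ∈ Wσ, f x ∈ Wσ := by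
    intro x hx
    rw [hWσdef, LinearMap.BilinForm.mem_orthogonal_iff]
    intro z hz
    have : σ z (f x) = σ (f z) x := hsa z x
    rw [this]
    exact hx (f z) (hWinv z hz)
  have hcross : ∀ x ∈ W, ∀ y ∈ Wσ, σ x y = 0 := fun x hx y hy => hy x hx
  have hcross' : ∀ y ∈ Wσ, ∀ x ∈ W, σ y x = 0 := by
    intro y hy x hx
    rw [alt_skew halt, hcross x hx y hy, neg_zero]
  set σσ := σ.restrict Wσ with hσσdef
  set fσ := f.restrict hWσinv with hfσdef
  have haltσ : ∀ v : Wσ, σσ v v = 0 := fun v => halt (v : V)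
  have hndσ : σσ.Nondegenerate := by
    refine (LinearMap.IsRefl.nondegenerate_iff_separatingLeft
      (LinearMap.IsAlt.isRefl haltσ)).mpr ?_
    intro x hx
    have hxall : ∀ y : V, σ (x : V) y = 0 := by
      intro y
      have hy : y ∈ W ⊔ Wσ := by
        rw [hcompl.sup_eq_top]; trivial
      obtain ⟨a, ha, b, hb, rfl⟩ := Submodule.mem_sup.mp hy
      rw [map_add]
      have h1 : σ (x : V) a = 0 := hcross' (x : V) x.2 a ha
      have h2 : σ (x : V) b = 0 := hx ⟨b, hb⟩
      rw [h1, h2, add_zero]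
    have : (x : V) = 0 := hnd.1 _ hxall
    exact Subtype.ext this
  have hsaσ : ∀ v w : Wσ, σσ v (fσ w) = σσ (fσ v) w := by
    intro v w
    exact hsa (v : V) (w : V)
  have hnilσ : IsNilpotent fσ := by
    refine ⟨m + 1, ?_⟩
    rw [hfσdef, Module.End.pow_restrict (m + 1) hWσinv]
    ext x
    simp [hfm1]
  have hdimW : finrank K W = (m + 1) + (m + 1) := by
    rw [finrank_eq_card_basis bW]
    simp
  have hdimsum : finrank K W + finrank K Wσ = 2 * n := by
    rw [Submodule.finrank_add_eq_of_isCompl hcompl, hdim]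
  have hmn : m + 1 ≤ n := by omega
  set n' := n - (m + 1) with hn'def
  have hdimσ : finrank K Wσ = 2 * n' := by omega
  obtain ⟨b', hb'D, B', hB'J, hB'M⟩ :=
    IH n' (by omega) Wσ hdimσ σσ haltσ hndσ fσ hsaσ hnilσ
  -- assemble the basis
  set d : Basis ((Fin (m + 1) ⊕ Fin n') ⊕ (Fin (m + 1) ⊕ Fin n')) K V :=
    (((bW.prod b').map (Submodule.prodEquivOfIsCompl W Wσ hcompl)).reindex
      (Equiv.sumSumSumComm (Fin (m + 1)) (Fin (m + 1)) (Fin n') (Fin n'))) with hddef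
  have hd_ul : ∀ i, d (Sum.inl (Sum.inl i)) = e (Sum.inl i) := by
    intro i
    rw [hddef, Basis.reindex_apply]
    rw [show (Equiv.sumSumSumComm (Fin (m + 1)) (Fin (m + 1)) (Fin n') (Fin n')).symm
        (Sum.inl (Sum.inl i)) = Sum.inl (Sum.inl i) from rfl]
    rw [Basis.map_apply, Basis.prod_apply]
    simp [Submodule.coe_prodEquivOfIsCompl', hbW]
  have hd_wl : ∀ i, d (Sum.inr (Sum.inl i)) = e (Sum.inr i) := by
    intro i
    rw [hddef, Basis.reindex_apply]
    rw [show (Equiv.sumSumSumComm (Fin (m + 1)) (Fin (m + 1)) (Fin n') (Fin n')).symm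
        (Sum.inr (Sum.inl i)) = Sum.inl (Sum.inr i) from rfl]
    rw [Basis.map_apply, Basis.prod_apply]
    simp [Submodule.coe_prodEquivOfIsCompl', hbW]
  have hd_ur : ∀ i, d (Sum.inl (Sum.inr i)) = ((b' (Sum.inl i) : Wσ) : V) := by
    intro i
    rw [hddef, Basis.reindex_apply]
    rw [show (Equiv.sumSumSumComm (Fin (m + 1)) (Fin (m + 1)) (Fin n') (Fin n')).symm
        (Sum.inl (Sum.inr i)) = Sum.inr (Sum.inl i) from rfl]
    rw [Basis.map_apply, Basis.prod_apply]
    simp [Submodule.coe_prodEquivOfIsCompl']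
  have hd_wr : ∀ i, d (Sum.inr (Sum.inr i)) = ((b' (Sum.inr i) : Wσ) : V) := by
    intro i
    rw [hddef, Basis.reindex_apply]
    rw [show (Equiv.sumSumSumComm (Fin (m + 1)) (Fin (m + 1)) (Fin n') (Fin n')).symm
        (Sum.inr (Sum.inr i)) = Sum.inr (Sum.inr i) from rfl]
    rw [Basis.map_apply, Basis.prod_apply]
    simp [Submodule.coe_prodEquivOfIsCompl']
  have hb'mem : ∀ y, ((b' y : Wσ) : V) ∈ Wσ := fun y => (b' y).2
  have hDd1 : ∀ x y, σ (d (Sum.inl x)) (d (Sum.inl y)) = 0 := by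
    intro x y
    cases x with
    | inl i =>
      cases y with
      | inl j => rw [hd_ul, hd_ul]; exact he_uu i j
      | inr j => rw [hd_ul, hd_ur]; exact hcross _ (hmemW _) _ (hb'mem _)
    | inr i =>
      cases y with
      | inl j => rw [hd_ur, hd_ul]; exact hcross' _ (hb'mem _) _ (hmemW _)
      | inr j =>
        rw [hd_ur, hd_ur]
        have := hb'D.1 i j
        exact this
  have hDd2 : ∀ x y, σ (d (Sum.inr x)) (d (Sum.inr y)) = 0 := by
    intro x y
    cases x with
    | inl i =>
      cases y with
      | inl j => rw [hd_wl, hd_wl]; exact he_ww i j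
      | inr j => rw [hd_wl, hd_wr]; exact hcross _ (hmemW _) _ (hb'mem _)
    | inr i =>
      cases y with
      | inl j => rw [hd_wr, hd_wl]; exact hcross' _ (hb'mem _) _ (hmemW _)
      | inr j =>
        rw [hd_wr, hd_wr]
        have := hb'D.2.1 i j
        exact this
  have hDd3 : ∀ x y, σ (d (Sum.inr x)) (d (Sum.inl y)) = if x = y then 1 else 0 := by
    intro x y
    cases x with
    | inl i =>
      cases y with
      | inl j =>
        rw [hd_wl, hd_ul, he_wu i j]
        simp [Sum.inl.injEq]
      | inr j =>
        rw [hd_wl, hd_ur, hcross _ (hmemW _) _ (hb'mem _)]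
        simp
    | inr i =>
      cases y with
      | inl j =>
        rw [hd_wr, hd_ul, hcross' _ (hb'mem _) _ (hmemW _)]
        simp
      | inr j =>
        rw [hd_wr, hd_ur]
        have := hb'D.2.2 i j
        simp only [Sum.inr.injEq]
        exact this
  -- matrix of f at d level
  have hfσapply : ∀ y, fσ (b' y) = ∑ z, (Matrix.fromBlocks B' 0 0 B'.transpose) z y • b' z := by
    intro y
    conv_lhs => rw [← b'.sum_repr (fσ (b' y))]
    refine Finset.sum_congr rfl fun z _ => ?_
    rw [← hB'M, LinearMap.toMatrix_apply]
  have hfb' : ∀ y, f ((b' y : Wσ) : V) =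
      ∑ z, (Matrix.fromBlocks B' 0 0 B'.transpose) z y • ((b' z : Wσ) : V) := by
    intro y
    have h1 : f ((b' y : Wσ) : V) = ((fσ (b' y) : Wσ) : V) := by
      rw [hfσdef]
      exact (LinearMap.restrict_coe_apply f hWσinv (b' y)).symm
    rw [h1, hfσapply y]
    push_cast
    rfl
  set J : Matrix (Fin (m + 1)) (Fin (m + 1)) K :=
    Matrix.of (fun p q => if (q : ℕ) = (p : ℕ) + 1 then 1 else 0) with hJdef
  set Bd : Matrix (Fin (m + 1) ⊕ Fin n') (Fin (m + 1) ⊕ Fin n') K :=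
    Matrix.fromBlocks J 0 0 B' with hBddef
  have hMd : LinearMap.toMatrix d d f = Matrix.fromBlocks Bd 0 0 Bd.transpose := by
    apply toMatrix_eq_of
    intro j
    rw [Fintype.sum_sum_type]
    simp only [Fintype.sum_sum_type]
    rcases j with x | x <;> rcases x with p | p
    · -- column u_p
      rw [hd_ul p, hfu p]
      simp only [hBddef, Matrix.fromBlocks_apply₁₁, Matrix.fromBlocks_apply₁₂,
        Matrix.fromBlocks_apply₂₁, Matrix.fromBlocks_apply₂₂, Matrix.zero_apply,
        Matrix.transpose_apply, zero_smul, Finset.sum_const_zero, add_zero, hd_ul,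
        hd_ur, hd_wl, hd_wr, hJdef, Matrix.of_apply]
      by_cases hp : (p : ℕ) = 0
      · rw [dif_pos hp]
        symm
        apply Finset.sum_eq_zero
        intro q _
        rw [if_neg (by omega), zero_smul]
      · rw [dif_neg hp]
        have hlt : (p : ℕ) - 1 < m + 1 := by omega
        symm
        rw [Finset.sum_eq_single_of_mem (⟨(p : ℕ) - 1, hlt⟩ : Fin (m + 1))
          (Finset.mem_univ _)]
        · rw [if_pos (by simp; omega), one_smul]
        · intro q _ hq
          rw [if_neg, zero_smul]
          intro hc
          exact hq (Fin.ext (by simp only [Fin.val_mk]; omega))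
    · -- column b' (inl p)
      rw [hd_ur p, hfb' (Sum.inl p)]
      rw [Fintype.sum_sum_type]
      simp only [hBddef, Matrix.fromBlocks_apply₁₁, Matrix.fromBlocks_apply₁₂,
        Matrix.fromBlocks_apply₂₁, Matrix.fromBlocks_apply₂₂, Matrix.zero_apply,
        Matrix.transpose_apply, zero_smul, Finset.sum_const_zero, add_zero, zero_add,
        hd_ul, hd_ur, hd_wl, hd_wr]
    · -- column w_p
      rw [hd_wl p, hfw p]
      simp only [hBddef, Matrix.fromBlocks_apply₁₁, Matrix.fromBlocks_apply₁₂,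
        Matrix.fromBlocks_apply₂₁, Matrix.fromBlocks_apply₂₂, Matrix.zero_apply,
        Matrix.transpose_apply, zero_smul, Finset.sum_const_zero, add_zero, zero_add,
        hd_ul, hd_ur, hd_wl, hd_wr, hJdef, Matrix.of_apply]
      by_cases hp : (p : ℕ) = m
      · rw [dif_pos hp]
        symm
        apply Finset.sum_eq_zero
        intro q _
        rw [if_neg (by omega), zero_smul]
      · rw [dif_neg hp]
        have hlt : (p : ℕ) + 1 < m + 1 := by omega
        symm
        rw [Finset.sum_eq_single_of_mem (⟨(p : ℕ) + 1, hlt⟩ : Fin (m + 1))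
          (Finset.mem_univ _)]
        · rw [if_pos (by simp), one_smul]
        · intro q _ hq
          rw [if_neg, zero_smul]
          intro hc
          exact hq (Fin.ext (by simp only [Fin.val_mk]; omega))
    · -- column b' (inr p)
      rw [hd_wr p, hfb' (Sum.inr p)]
      rw [Fintype.sum_sum_type]
      simp only [hBddef, Matrix.fromBlocks_apply₁₁, Matrix.fromBlocks_apply₁₂,
        Matrix.fromBlocks_apply₂₁, Matrix.fromBlocks_apply₂₂, Matrix.zero_apply,
        Matrix.transpose_apply, zero_smul, Finset.sum_const_zero, add_zero, zero_add,
        hd_ul, hd_ur, hd_wl, hd_wr]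
  -- final reindexing
  have hsum' : (m + 1) + n' = n := by omega
  set ρ : (Fin (m + 1) ⊕ Fin n') ≃ Fin n := finSumFinEquiv.trans (finCongr hsum') with hρdef
  set E : ((Fin (m + 1) ⊕ Fin n') ⊕ (Fin (m + 1) ⊕ Fin n')) ≃ (Fin n ⊕ Fin n) :=
    Equiv.sumCongr ρ ρ with hEdef
  set c : Basis (Fin n ⊕ Fin n) K V := d.reindex E with hcdef
  have hcl : ∀ i : Fin n, c (Sum.inl i) = d (Sum.inl (ρ.symm i)) := by
    intro i
    rw [hcdef, Basis.reindex_apply, hEdef]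
    rfl
  have hcr : ∀ i : Fin n, c (Sum.inr i) = d (Sum.inr (ρ.symm i)) := by
    intro i
    rw [hcdef, Basis.reindex_apply, hEdef]
    rfl
  refine ⟨c, ⟨?_, ?_, ?_⟩, Bd.submatrix ρ.symm ρ.symm, ?_, ?_⟩
  · intro i j
    rw [hcl, hcl]
    exact hDd1 _ _
  · intro i j
    rw [hcr, hcr]
    exact hDd2 _ _
  · intro i j
    rw [hcr, hcl, hDd3]
    by_cases h : i = j
    · rw [if_pos h, if_pos (by rw [h])]
    · rw [if_neg h, if_neg (fun hc => h (by
        have := congrArg ρ hc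
        simpa using this))]
  · exact jnf_concat hsum' (jnf_jordanBlock (m + 1)) hB'J
  · have htrans : ∀ (i j : Fin n ⊕ Fin n),
        LinearMap.toMatrix c c f i j = LinearMap.toMatrix d d f (E.symm i) (E.symm j) := by
      intro i j
      rw [LinearMap.toMatrix_apply, LinearMap.toMatrix_apply, hcdef, Basis.reindex_apply,
        Basis.repr_reindex_apply]
    ext i j
    rw [htrans, hMd]
    rcases i with i | i <;> rcases j with j | j
    · rw [show E.symm (Sum.inl i) = Sum.inl (ρ.symm i) from rfl,
        show E.symm (Sum.inl j) = Sum.inl (ρ.symm j) from rfl]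
      simp [Matrix.fromBlocks_apply₁₁, Matrix.submatrix_apply]
    · rw [show E.symm (Sum.inl i) = Sum.inl (ρ.symm i) from rfl,
        show E.symm (Sum.inr j) = Sum.inr (ρ.symm j) from rfl]
      simp
    · rw [show E.symm (Sum.inr i) = Sum.inr (ρ.symm i) from rfl,
        show E.symm (Sum.inl j) = Sum.inl (ρ.symm j) from rfl]
      simp
    · rw [show E.symm (Sum.inr i) = Sum.inr (ρ.symm i) from rfl,
        show E.symm (Sum.inr j) = Sum.inr (ρ.symm j) from rfl]
      simp [Matrix.fromBlocks_apply₂₂, Matrix.submatrix_apply, Matrix.transpose_apply]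

theorem nilpotent_selfAdjoint_jordan_pair
    {K V : Type*} [Field K] [AddCommGroup V] [Module K V] [FiniteDimensional K V]
    (hchar : (2 : K) ≠ 0) (n : ℕ) (hn : 0 < n)
    (hdim : Module.finrank K V = 2 * n)
    (σ : LinearMap.BilinForm K V) (halt : ∀ v, σ v v = 0) (hnd : σ.Nondegenerate)
    (f : Module.End K V) (hsa : ∀ v w, σ v (f w) = σ (f v) w)
    (hnil : IsNilpotent f) :
    ∃ b : Module.Basis (Fin n ⊕ Fin n) K V, IsDarbouxBasis σ b ∧
      ∃ B : Matrix (Fin n) (Fin n) K, IsJordanNormalForm B ∧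
        LinearMap.toMatrix b b f = Matrix.fromBlocks B 0 0 B.transpose := by
  exact aux hchar n V hdim σ halt hnd f hsa hnil
end

section
/- Let K be a field with char K ≠ 2, n ≥ 1, and Ω = [[0, I_n],[−I_n, 0]] ∈ M_{2n×2n}(K). Suppose A ∈ M_{2n×2n}(K) satisfies Aᵀ = Ω A Ω⁻¹ and all eigenvalues of A are in K. Then there exists a symplectic matrix C (Cᵀ Ω C = Ω) such that C⁻¹ A C = [[B, 0],[0, Bᵀ]] for some B ∈ M_{n×n}(K) in Jordan normal form. -/
open Module Polynomial

section Aux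
variable {K V : Type*} [Field K] [AddCommGroup V] [Module K V]

/-- generalized eigenvectors for distinct eigenvalues of a self-adjoint operator
are orthogonal. -/
lemma symp_ortho_aux (ω : V →ₗ[K] V →ₗ[K] K) (T : Module.End K V)
    (hT : ∀ x y, ω (T x) y = ω x (T y)) {l m : K} (hne : l ≠ m) :
    ∀ (s a b : ℕ) (x y : V), a + b ≤ s → ((T - l • 1) ^ a) x = 0 →
      ((T - m • 1) ^ b) y = 0 → ω x y = 0 := by
  intro s
  induction s with
  | zero =>
    intro a b x y hab hx hy
    have ha : a = 0 := by omega
    subst ha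
    simp only [pow_zero, Module.End.one_apply] at hx
    simp [hx]
  | succ s ih =>
    intro a b x y hab hx hy
    match a, b with
    | 0, b =>
      simp only [pow_zero, Module.End.one_apply] at hx
      simp [hx]
    | a+1, 0 =>
      simp only [pow_zero, Module.End.one_apply] at hy
      simp [hy]
    | a+1, b+1 =>
      rw [pow_succ, Module.End.mul_apply] at hx hy
      have h1 : ω ((T - l • 1) x) y = 0 := by
        refine ih a (b + 1) _ _ (by omega) hx ?_
        rw [pow_succ, Module.End.mul_apply]; exact hy
      have h2 : ω x ((T - m • 1) y) = 0 := by
        refine ih (a + 1) b _ _ (by omega) ?_ hy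
        rw [pow_succ, Module.End.mul_apply]; exact hx
      have e1 : ω ((T - l • 1) x) y = ω (T x) y - l * ω x y := by
        have hx' : (T - l • 1) x = T x - l • x := by simp
        rw [hx', map_sub, LinearMap.sub_apply, map_smul, LinearMap.smul_apply,
          smul_eq_mul]
      have e2 : ω x ((T - m • 1) y) = ω (T x) y - m * ω x y := by
        have hy' : (T - m • 1) y = T y - m • y := by simp
        rw [hy', map_sub, map_smul, smul_eq_mul, hT]
      have key : (m - l) * ω x y = 0 := by
        rw [e1] at h1; rw [e2] at h2
        have := sub_eq_zero.mpr (h1.trans h2.symm)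
        ring_nf at this ⊢
        linear_combination this
      have hml : m - l ≠ 0 := sub_ne_zero.mpr hne.symm
      exact (mul_eq_zero.mp key).resolve_left hml

/-- primary decomposition : if a split polynomial kills `x` then `x` lies in the
span of the maximal generalized eigenspaces. -/
lemma mem_iSup_maxGenEigenspace_of_aeval (T : Module.End K V) :
    ∀ (d : ℕ) (p : K[X]), p.natDegree ≤ d → p ≠ 0 → p.Splits →
      ∀ x : V, (Polynomial.aeval T p) x = 0 →
        x ∈ ⨆ μ : K, T.maxGenEigenspace μ := by
  intro d
  induction d with
  | zero =>
    intro p hdeg hp0 _ x hx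
    obtain ⟨c, rfl⟩ := Polynomial.natDegree_eq_zero.mp (Nat.le_zero.mp hdeg)
    have hc : c ≠ 0 := by simpa using hp0
    rw [Polynomial.aeval_C, Module.algebraMap_end_apply] at hx
    have : x = 0 := by
      have := congrArg (fun z => c⁻¹ • z) hx
      simpa [smul_smul, inv_mul_cancel₀ hc] using this
    simp [this]
  | succ d ih =>
    intro p hdeg hp0 hsp x hx
    by_cases hd0 : p.natDegree = 0
    · obtain ⟨c, rfl⟩ := Polynomial.natDegree_eq_zero.mp hd0
      have hc : c ≠ 0 := by simpa using hp0
      rw [Polynomial.aeval_C, Module.algebraMap_end_apply] at hx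
      have : x = 0 := by
        have := congrArg (fun z => c⁻¹ • z) hx
        simpa [smul_smul, inv_mul_cancel₀ hc] using this
      simp [this]
    · have hdeg0 : p.degree ≠ 0 := fun h =>
        hd0 (Polynomial.natDegree_eq_zero_iff_degree_le_zero.mpr h.le)
      obtain ⟨l, hl⟩ := Polynomial.Splits.exists_eval_eq_zero hsp hdeg0
      have hroot : p.IsRoot l := by
        simpa [Polynomial.eval₂_eq_eval_map] using hl
      set k := p.rootMultiplicity l with hk
      have hkpos : 0 < k := (Polynomial.rootMultiplicity_pos hp0).mpr hroot
      obtain ⟨q, hpq, hndvd⟩ := p.exists_eq_pow_rootMultiplicity_mul_and_not_dvd hp0 l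
      have hq0 : q ≠ 0 := fun h => hp0 (by rw [hpq, h, mul_zero])
      have hco : IsCoprime ((X - C l) ^ k) q :=
        ((Polynomial.irreducible_X_sub_C l).coprime_iff_not_dvd.mpr hndvd).pow_left
      have hker : x ∈ LinearMap.ker ((aeval T) ((X - C l) ^ k * q)) := by
        rw [hk, ← hpq]; exact LinearMap.mem_ker.mpr hx
      rw [← Polynomial.sup_ker_aeval_eq_ker_aeval_mul_of_coprime T hco] at hker
      obtain ⟨y, hy, z, hz, rfl⟩ := Submodule.mem_sup.mp hker
      refine Submodule.add_mem _ ?_ ?_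
      · refine Submodule.mem_iSup_of_mem l ?_
        rw [Module.End.mem_maxGenEigenspace]
        refine ⟨k, ?_⟩
        have halg : (algebraMap K (Module.End K V)) l = l • 1 := by
          ext v; simp [Module.algebraMap_end_apply]
        have haev : (aeval T) ((X - C l) ^ k) = (T - l • 1) ^ k := by
          rw [map_pow, map_sub, aeval_X, aeval_C, halg]
        rw [← haev]
        exact LinearMap.mem_ker.mp hy
      · have hXk : ((X : K[X]) - C l) ^ k ≠ 0 := pow_ne_zero k (Polynomial.X_sub_C_ne_zero l)
        have hnd : p.natDegree = k + q.natDegree := by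
          rw [hpq, Polynomial.natDegree_mul hXk hq0, Polynomial.natDegree_pow,
            Polynomial.natDegree_X_sub_C, mul_one]
        have hqdeg : q.natDegree ≤ d := by omega
        have hqsp : q.Splits :=
          Polynomial.Splits.of_dvd hsp hp0 ⟨(X - C l) ^ k, by rw [hpq]; ring⟩
        exact ih q hqdeg hq0 hqsp z (LinearMap.mem_ker.mp hz)

end Aux


section Chain
variable {K V : Type*} [Field K] [AddCommGroup V] [Module K V]
variable (ω : V →ₗ[K] V →ₗ[K] K)

lemma pow_selfadj (N : Module.End K V) (hN : ∀ x y, ω (N x) y = ω x (N y)) :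
    ∀ (a : ℕ) (x y : V), ω ((N ^ a) x) y = ω x ((N ^ a) y) := by
  intro a
  induction a with
  | zero => simp
  | succ a ih =>
    intro x y
    have h1 : (N ^ (a + 1)) x = (N ^ a) (N x) := by rw [pow_succ, Module.End.mul_apply]
    have h2 : (N ^ (a + 1)) y = N ((N ^ a) y) := by rw [pow_succ', Module.End.mul_apply]
    rw [h1, h2, ih, hN]

lemma chain_self_ortho (hchar : (2 : K) ≠ 0) (hskew : ∀ x y, ω x y = - ω y x)
    (N : Module.End K V) (hN : ∀ x y, ω (N x) y = ω x (N y)) (p q : ℕ) (x : V) :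
    ω ((N ^ p) x) ((N ^ q) x) = 0 := by
  have h1 : ω ((N ^ p) x) ((N ^ q) x) = ω x ((N ^ (p + q)) x) := by
    rw [pow_selfadj ω N hN, ← Module.End.mul_apply, ← pow_add]
  have h2 : ω ((N ^ q) x) ((N ^ p) x) = ω x ((N ^ (p + q)) x) := by
    rw [pow_selfadj ω N hN, ← Module.End.mul_apply, ← pow_add, add_comm q p]
  have h3 := hskew ((N ^ p) x) ((N ^ q) x)
  rw [h1, h2] at h3
  have h4 : (2 : K) * ω x ((N ^ (p + q)) x) = 0 := by linear_combination h3
  rw [h1]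
  exact (mul_eq_zero.mp h4).resolve_left hchar

lemma exists_chain_pair (hchar : (2 : K) ≠ 0) (hskew : ∀ x y, ω x y = - ω y x)
    (N : Module.End K V) (hN : ∀ x y, ω (N x) y = ω x (N y))
    (Wl : Submodule K V) (hNW : ∀ x ∈ Wl, N x ∈ Wl)
    (hnil : ∃ c, ∀ x ∈ Wl, (N ^ c) x = 0)
    (hnd : ∀ x ∈ Wl, (∀ y ∈ Wl, ω x y = 0) → x = 0)
    (hbot : Wl ≠ ⊥) :
    ∃ (m : ℕ) (v w : V), 0 < m ∧ v ∈ Wl ∧ w ∈ Wl ∧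
      (∀ x ∈ Wl, (N ^ m) x = 0) ∧
      (∀ k, ω v ((N ^ k) w) = if k = m - 1 then 1 else 0) := by
  classical
  have hNpow : ∀ (j : ℕ), ∀ x ∈ Wl, (N ^ j) x ∈ Wl := by
    intro j
    induction j with
    | zero => intro x hx; simpa using hx
    | succ j ih =>
      intro x hx
      rw [pow_succ', Module.End.mul_apply]
      exact hNW _ (ih x hx)
  obtain ⟨c, hc⟩ := hnil
  let P : ℕ → Prop := fun c => ∀ x ∈ Wl, (N ^ c) x = 0
  have hPc : P c := hc
  let m := Nat.find ⟨c, hPc⟩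
  have hm : P m := Nat.find_spec ⟨c, hPc⟩
  have hm0 : 0 < m := by
    rcases Nat.eq_zero_or_pos m with h | h
    swap
    · exact h
    · exfalso
      apply hbot
      rw [Submodule.eq_bot_iff]
      intro x hx
      have := hm x hx
      rw [h] at this
      simpa using this
  have hm1 : ¬ ∀ x ∈ Wl, (N ^ (m - 1)) x = 0 := Nat.find_min ⟨c, hPc⟩ (by omega)
  push_neg at hm1
  obtain ⟨y, hyW, hy0⟩ := hm1
  have hz : ∃ z ∈ Wl, ω ((N ^ (m - 1)) y) z ≠ 0 := by
    by_contra h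
    push_neg at h
    exact hy0 (hnd _ (hNpow _ _ hyW) h)
  obtain ⟨z, hzW, hz0⟩ := hz
  have hc0 : ω z ((N ^ (m - 1)) y) ≠ 0 := by
    rw [hskew]
    simpa using hz0
  -- kill powers ≥ m
  have hhi : ∀ (w : V), w ∈ Wl → ∀ k, m ≤ k → (N ^ k) w = 0 := by
    intro w hw k hk
    have hke : k = (k - m) + m := by omega
    rw [hke, pow_add, Module.End.mul_apply, hm w hw, map_zero]
  set c0 := ω z ((N ^ (m - 1)) y) with hc0def
  have main : ∀ t : ℕ, t ≤ m - 1 → ∃ w ∈ Wl,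
      (∀ k, m - 1 - t ≤ k → k ≠ m - 1 → ω z ((N ^ k) w) = 0) ∧
      ω z ((N ^ (m - 1)) w) = 1 := by
    intro t
    induction t with
    | zero =>
      intro _
      refine ⟨c0⁻¹ • y, Submodule.smul_mem _ _ hyW, ?_, ?_⟩
      · intro k hk1 hk2
        rw [map_smul, map_smul, hhi y hyW k (by omega)]
        simp
      · rw [map_smul, map_smul, smul_eq_mul, ← hc0def, inv_mul_cancel₀ hc0]
    | succ t ih =>
      intro ht
      obtain ⟨w, hwW, hw0, hw1⟩ := ih (by omega)
      set c1 := ω z ((N ^ (m - 1 - (t + 1))) w) with hc1def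
      refine ⟨w - c1 • (N ^ (t + 1)) w,
        Submodule.sub_mem _ hwW (Submodule.smul_mem _ _ (hNpow _ _ hwW)), ?_, ?_⟩
      · intro k hk1 hk2
        have hcomp : (N ^ k) ((N ^ (t + 1)) w) = (N ^ (k + (t + 1))) w := by
          rw [← Module.End.mul_apply, ← pow_add]
        have hsplit : ω z ((N ^ k) (w - c1 • (N ^ (t + 1)) w)) =
            ω z ((N ^ k) w) - c1 * ω z ((N ^ (k + (t + 1))) w) := by
          rw [map_sub, map_smul, hcomp, map_sub, map_smul, smul_eq_mul]
        rw [hsplit]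
        by_cases hk3 : k = m - 1 - (t + 1)
        · have he : k + (t + 1) = m - 1 := by omega
          rw [he, hw1, hk3, ← hc1def]
          ring
        · rw [hw0 k (by omega) hk2, hw0 (k + (t + 1)) (by omega) (by omega)]
          ring
      · have hcomp : (N ^ (m - 1)) ((N ^ (t + 1)) w) = (N ^ ((m - 1) + (t + 1))) w := by
          rw [← Module.End.mul_apply, ← pow_add]
        have hsplit : ω z ((N ^ (m - 1)) (w - c1 • (N ^ (t + 1)) w)) =
            ω z ((N ^ (m - 1)) w) - c1 * ω z ((N ^ ((m - 1) + (t + 1))) w) := by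
          rw [map_sub, map_smul, hcomp, map_sub, map_smul, smul_eq_mul]
        rw [hsplit, hw1, hhi w hwW _ (by omega)]
        simp
  obtain ⟨w, hwW, hw0, hw1⟩ := main (m - 1) le_rfl
  refine ⟨m, z, w, hm0, hzW, hwW, hm, ?_⟩
  intro k
  by_cases hk : k = m - 1
  · rw [if_pos hk, hk, hw1]
  · rw [if_neg hk, hw0 k (by omega) hk]
end Chain


section Main
open Module Polynomial

variable {K V : Type*} [Field K] [AddCommGroup V] [Module K V] [FiniteDimensional K V]

lemma pow_mem_invariant (N : Module.End K V) (Wl : Submodule K V)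
    (hNW : ∀ x ∈ Wl, N x ∈ Wl) :
    ∀ (j : ℕ), ∀ x ∈ Wl, (N ^ j) x ∈ Wl := by
  intro j
  induction j with
  | zero => intro x hx; simpa using hx
  | succ j ih =>
    intro x hx
    rw [pow_succ', Module.End.mul_apply]
    exact hNW _ (ih x hx)

lemma symp_main (hchar : (2 : K) ≠ 0)
    (ω : V →ₗ[K] V →ₗ[K] K) (hskew : ∀ x y, ω x y = - ω y x)
    (T : Module.End K V) (hT : ∀ x y, ω (T x) y = ω x (T y)) :
    ∀ (d : ℕ) (W : Submodule K V), Module.finrank K W ≤ d →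
      (∀ x ∈ W, T x ∈ W) →
      (∀ x ∈ W, (∀ y ∈ W, ω x y = 0) → x = 0) →
      (∀ x ∈ W, x ∈ ⨆ μ : K, (W ⊓ T.maxGenEigenspace μ)) →
      ∃ (k : ℕ) (B : Matrix (Fin k) (Fin k) K) (e f : Fin k → V),
        2 * k = Module.finrank K W ∧ IsJordanNormalForm B ∧
        (∀ i, e i ∈ W) ∧ (∀ i, f i ∈ W) ∧
        (∀ i j, ω (e i) (e j) = 0) ∧ (∀ i j, ω (f i) (f j) = 0) ∧
        (∀ i j, ω (e i) (f j) = if i = j then 1 else 0) ∧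
        (∀ j, T (e j) = ∑ i, B i j • e i) ∧
        (∀ j, T (f j) = ∑ i, B j i • f i) := by
  classical
  have base : ∀ (W : Submodule K V), Module.finrank K W = 0 →
      ∃ (k : ℕ) (B : Matrix (Fin k) (Fin k) K) (e f : Fin k → V),
        2 * k = Module.finrank K W ∧ IsJordanNormalForm B ∧
        (∀ i, e i ∈ W) ∧ (∀ i, f i ∈ W) ∧
        (∀ i j, ω (e i) (e j) = 0) ∧ (∀ i j, ω (f i) (f j) = 0) ∧
        (∀ i j, ω (e i) (f j) = if i = j then 1 else 0) ∧
        (∀ j, T (e j) = ∑ i, B i j • e i) ∧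
        (∀ j, T (f j) = ∑ i, B j i • f i) := by
    intro W h0
    exact ⟨0, 1, Fin.elim0, Fin.elim0, by simp [h0], ⟨fun i => i.elim0, fun i => i.elim0⟩,
      fun i => i.elim0, fun i => i.elim0, fun i => i.elim0, fun i => i.elim0,
      fun i => i.elim0, fun j => j.elim0, fun j => j.elim0⟩
  intro d
  induction d with
  | zero =>
    intro W hrank _ _ _
    exact base W (Nat.le_zero.mp hrank)
  | succ d ih =>
    intro W hrank hTW hnd hsupr
    by_cases h0 : Module.finrank K W = 0
    · exact base W h0
    -- find a nonzero vector
    have hWne : ∃ x : V, x ∈ W ∧ x ≠ 0 := by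
      by_contra h
      push_neg at h
      apply h0
      have hbot : W = ⊥ := by
        rw [Submodule.eq_bot_iff]
        intro x hx
        by_contra hx0
        exact hx0 (h x hx)
      rw [hbot]
      exact finrank_bot K V
    obtain ⟨x₀, hx₀W, hx₀0⟩ := hWne
    -- find an eigenvalue with nonzero piece inside W
    have hlam : ∃ l : K, (W ⊓ T.maxGenEigenspace l) ≠ ⊥ := by
      by_contra h
      push_neg at h
      have hs := hsupr x₀ hx₀W
      have : (⨆ μ : K, (W ⊓ T.maxGenEigenspace μ)) = ⊥ := by
        simp [h]
      rw [this, Submodule.mem_bot] at hs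
      exact hx₀0 hs
    obtain ⟨l, hWl⟩ := hlam
    set Wl : Submodule K V := W ⊓ T.maxGenEigenspace l with hWldef
    set N : Module.End K V := T - l • (1 : Module.End K V) with hNdef
    have hNapp : ∀ x : V, N x = T x - l • x := by
      intro x; rw [hNdef]; simp
    have hNsa : ∀ x y, ω (N x) y = ω x (N y) := by
      intro x y
      rw [hNapp, hNapp, map_sub, LinearMap.sub_apply, map_smul, LinearMap.smul_apply,
        map_sub, map_smul, hT]
    have hTofN : ∀ x : V, T x = N x + l • x := by
      intro x; rw [hNapp]; abel
    have hNW : ∀ x ∈ Wl, N x ∈ Wl := by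
      intro x hx
      obtain ⟨hx1, hx2⟩ := Submodule.mem_inf.mp hx
      refine Submodule.mem_inf.mpr ⟨?_, ?_⟩
      · rw [hNapp]
        exact Submodule.sub_mem _ (hTW x hx1) (Submodule.smul_mem _ _ hx1)
      · obtain ⟨c, hc⟩ := (Module.End.mem_maxGenEigenspace T l x).mp hx2
        refine (Module.End.mem_maxGenEigenspace T l (N x)).mpr ⟨c, ?_⟩
        have : ((T - l • 1) ^ c) (N x) = N (((T - l • 1) ^ c) x) := by
          rw [hNdef, ← Module.End.mul_apply, ← Module.End.mul_apply, ← pow_succ, ← pow_succ']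
        rw [this, hc, map_zero]
    have hnil : ∃ c, ∀ x ∈ Wl, (N ^ c) x = 0 := by
      refine ⟨(T.maxGenEigenspaceIndex l : ℕ), ?_⟩
      intro x hx
      have hx2 := (Submodule.mem_inf.mp hx).2
      rw [Module.End.maxGenEigenspace_eq] at hx2
      obtain ⟨a, hale, hker⟩ := Module.End.mem_genEigenspace.mp hx2
      have ha : a ≤ (T.maxGenEigenspaceIndex l : ℕ) := by exact_mod_cast hale
      have hkera : (N ^ a) x = 0 := by
        rw [hNdef]; exact LinearMap.mem_ker.mp hker
      have hce : ((T.maxGenEigenspaceIndex l : ℕ)) = ((T.maxGenEigenspaceIndex l : ℕ) - a) + a := by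
        omega
      rw [hce, pow_add, Module.End.mul_apply, hkera, map_zero]
    -- orthogonality of distinct generalized eigenspaces
    have hOrth : ∀ (mu : K), mu ≠ l → ∀ x ∈ T.maxGenEigenspace l,
        ∀ y ∈ T.maxGenEigenspace mu, ω x y = 0 := by
      intro mu hmu x hx y hy
      obtain ⟨a, ha⟩ := (Module.End.mem_maxGenEigenspace T l x).mp hx
      obtain ⟨b, hb⟩ := (Module.End.mem_maxGenEigenspace T mu y).mp hy
      exact symp_ortho_aux ω T hT (fun h => hmu h.symm) (a + b) a b x y le_rfl ha hb
    -- nondegeneracy of ω on Wl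
    have hndWl : ∀ x ∈ Wl, (∀ y ∈ Wl, ω x y = 0) → x = 0 := by
      intro x hx hxy
      apply hnd x (Submodule.mem_inf.mp hx).1
      intro y hyW
      obtain ⟨g, hg, hgsum⟩ :=
        (Submodule.mem_iSup_iff_exists_finsupp _ y).mp (hsupr y hyW)
      rw [← hgsum, map_finsuppSum, Finsupp.sum]
      apply Finset.sum_eq_zero
      intro mu _
      by_cases hmu : mu = l
      · subst hmu
        exact hxy _ (hg mu)
      · exact hOrth mu hmu x (Submodule.mem_inf.mp hx).2 (g mu)
          (Submodule.mem_inf.mp (hg mu)).2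
    -- the chain pair
    obtain ⟨m, v, w, hm0, hvW, hwW, hmkill, hvw⟩ :=
      exists_chain_pair ω hchar hskew N hNsa Wl hNW hnil hndWl hWl
    have hNWpow := pow_mem_invariant N Wl hNW
    set ec : Fin m → V := fun i => (N ^ (m - 1 - (i : ℕ))) v with hecdef
    set fc : Fin m → V := fun i => (N ^ (i : ℕ)) w with hfcdef
    have hecWl : ∀ i, ec i ∈ Wl := fun i => hNWpow _ v hvW
    have hfcWl : ∀ i, fc i ∈ Wl := fun i => hNWpow _ w hwW
    have hecW : ∀ i, ec i ∈ W := fun i => (Submodule.mem_inf.mp (hecWl i)).1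
    have hfcW : ∀ i, fc i ∈ W := fun i => (Submodule.mem_inf.mp (hfcWl i)).1
    have gram_ee : ∀ i j, ω (ec i) (ec j) = 0 := fun i j =>
      chain_self_ortho ω hchar hskew N hNsa _ _ v
    have gram_ff : ∀ i j, ω (fc i) (fc j) = 0 := fun i j =>
      chain_self_ortho ω hchar hskew N hNsa _ _ w
    have gram_ef : ∀ i j : Fin m, ω (ec i) (fc j) = if i = j then 1 else 0 := by
      intro i j
      have h1 : ω (ec i) (fc j) = ω v ((N ^ ((m - 1 - (i : ℕ)) + (j : ℕ))) w) := by
        rw [hecdef, hfcdef]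
        rw [pow_selfadj ω N hNsa, ← Module.End.mul_apply, ← pow_add]
      rw [h1, hvw]
      have hi := i.isLt
      have hj := j.isLt
      have hiff : ((m - 1 - (i : ℕ)) + (j : ℕ) = m - 1) ↔ (i = j) := by
        rw [Fin.ext_iff]
        omega
      exact if_congr hiff rfl rfl
    have gram_fe : ∀ i j : Fin m, ω (fc i) (ec j) = - if j = i then 1 else 0 := by
      intro i j
      rw [hskew, gram_ef]
    -- the Jordan block
    set Jm : Matrix (Fin m) (Fin m) K := Matrix.of (fun i j =>
      if (i : ℕ) = (j : ℕ) then l else if (j : ℕ) = (i : ℕ) + 1 then 1 else 0) with hJmdef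
    have act_e : ∀ j : Fin m, T (ec j) = ∑ i, Jm i j • ec i := by
      intro j
      have hj := j.isLt
      have hsum : ∑ i, Jm i j • ec i =
          (∑ i : Fin m, (if i = j then l • ec i else 0)) +
          ∑ i : Fin m, (if (j : ℕ) = (i : ℕ) + 1 then ec i else 0) := by
        rw [← Finset.sum_add_distrib]
        apply Finset.sum_congr rfl
        intro i _
        simp only [hJmdef, Matrix.of_apply, Fin.ext_iff]
        split_ifs <;> first | (exfalso; omega) | simp
      have hfirst : (∑ i : Fin m, (if i = j then l • ec i else 0)) = l • ec j := by simp
      have hTe : T (ec j) = N (ec j) + l • ec j := hTofN (ec j)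
      have hNe1 : N (ec j) = (N ^ (m - 1 - (j : ℕ) + 1)) v := by
        simp only [hecdef]
        rw [← Module.End.mul_apply, ← pow_succ']
      by_cases hj0 : (j : ℕ) = 0
      · have hNe : N (ec j) = 0 := by
          rw [hNe1, show m - 1 - (j : ℕ) + 1 = m by omega]
          exact hmkill v hvW
        have hsecond : (∑ i : Fin m, (if (j : ℕ) = (i : ℕ) + 1 then ec i else 0)) = 0 := by
          apply Finset.sum_eq_zero
          intro i _
          rw [if_neg (by omega)]
        rw [hTe, hNe, hsum, hfirst, hsecond, zero_add, add_zero]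
      · set jp : Fin m := ⟨(j : ℕ) - 1, by omega⟩ with hjp
        have hNe : N (ec j) = ec jp := by
          rw [hNe1]
          simp only [hecdef]
          rw [show m - 1 - (j : ℕ) + 1 = m - 1 - ((jp : ℕ)) by simp only [hjp]; omega]
        have hsecond : (∑ i : Fin m, (if (j : ℕ) = (i : ℕ) + 1 then ec i else 0)) = ec jp := by
          have hcond : ∀ i : Fin m, ((j : ℕ) = (i : ℕ) + 1) ↔ i = jp := by
            intro i
            rw [Fin.ext_iff]
            simp only [hjp]
            omega
          rw [Finset.sum_congr rfl (fun i _ => by rw [if_congr (hcond i) rfl rfl])]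
          simp
        rw [hTe, hNe, hsum, hfirst, hsecond]
        abel
    have act_f : ∀ j : Fin m, T (fc j) = ∑ i, Jm j i • fc i := by
      intro j
      have hj := j.isLt
      have hsum : ∑ i, Jm j i • fc i =
          (∑ i : Fin m, (if i = j then l • fc i else 0)) +
          ∑ i : Fin m, (if (i : ℕ) = (j : ℕ) + 1 then fc i else 0) := by
        rw [← Finset.sum_add_distrib]
        apply Finset.sum_congr rfl
        intro i _
        simp only [hJmdef, Matrix.of_apply, Fin.ext_iff]
        split_ifs <;> first | (exfalso; omega) | simp
      have hfirst : (∑ i : Fin m, (if i = j then l • fc i else 0)) = l • fc j := by simp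
      have hTf : T (fc j) = N (fc j) + l • fc j := hTofN (fc j)
      have hNf1 : N (fc j) = (N ^ ((j : ℕ) + 1)) w := by
        simp only [hfcdef]
        rw [← Module.End.mul_apply, ← pow_succ']
      by_cases hjm : (j : ℕ) + 1 < m
      · set jn : Fin m := ⟨(j : ℕ) + 1, hjm⟩ with hjn
        have hNf : N (fc j) = fc jn := by
          rw [hNf1]
        have hsecond : (∑ i : Fin m, (if (i : ℕ) = (j : ℕ) + 1 then fc i else 0)) = fc jn := by
          have hcond : ∀ i : Fin m, ((i : ℕ) = (j : ℕ) + 1) ↔ i = jn := by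
            intro i
            rw [Fin.ext_iff]
          rw [Finset.sum_congr rfl (fun i _ => by rw [if_congr (hcond i) rfl rfl])]
          simp
        rw [hTf, hNf, hsum, hfirst, hsecond]
        abel
      · have hNf : N (fc j) = 0 := by
          rw [hNf1, show (j : ℕ) + 1 = m by omega]
          exact hmkill w hwW
        have hsecond : (∑ i : Fin m, (if (i : ℕ) = (j : ℕ) + 1 then fc i else 0)) = 0 := by
          apply Finset.sum_eq_zero
          intro i _
          have := i.isLt
          rw [if_neg (by omega)]
        rw [hTf, hNf, hsum, hfirst, hsecond, zero_add, add_zero]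
    have hJm : IsJordanNormalForm Jm := by
      constructor
      · intro i j h1 h2
        simp only [hJmdef, Matrix.of_apply]
        rw [if_neg (by omega), if_neg (by omega)]
      · intro i j h1
        right
        refine ⟨?_, ?_⟩
        · simp only [hJmdef, Matrix.of_apply]
          rw [if_neg (by omega), if_pos (by omega)]
        · simp [hJmdef]
    -- the perpendicular complement
    set Φ : W →ₗ[K] ((Fin m → K) × (Fin m → K)) :=
      LinearMap.prod
        (LinearMap.pi fun i => (ω (ec i)).comp W.subtype)
        (LinearMap.pi fun i => (ω (fc i)).comp W.subtype) with hPhidef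
    have hΦapp : ∀ x : W, Φ x = (fun i => ω (ec i) (x : V), fun i => ω (fc i) (x : V)) := by
      intro x
      rfl
    have hΦsurj : LinearMap.range Φ = ⊤ := by
      rw [LinearMap.range_eq_top]
      rintro ⟨a, b⟩
      have hxW : (∑ j, a j • fc j - ∑ j, b j • ec j) ∈ W :=
        Submodule.sub_mem _ (Submodule.sum_mem _ fun j _ => Submodule.smul_mem _ _ (hfcW j))
          (Submodule.sum_mem _ fun j _ => Submodule.smul_mem _ _ (hecW j))
      refine ⟨⟨_, hxW⟩, ?_⟩
      rw [hΦapp]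
      refine Prod.ext ?_ ?_
      · funext i
        show ω (ec i) (∑ j, a j • fc j - ∑ j, b j • ec j) = a i
        rw [map_sub, map_sum, map_sum]
        simp only [map_smul, smul_eq_mul, gram_ef, gram_ee, mul_ite, mul_one, mul_zero]
        simp
      · funext i
        show ω (fc i) (∑ j, a j • fc j - ∑ j, b j • ec j) = b i
        rw [map_sub, map_sum, map_sum]
        simp only [map_smul, smul_eq_mul, gram_ff, gram_fe, mul_ite, mul_one, mul_zero,
          mul_neg]
        simp
    set Wp : Submodule K V := Submodule.map W.subtype (LinearMap.ker Φ) with hWpdef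
    have hWpmem : ∀ x : V, x ∈ Wp ↔
        (x ∈ W ∧ (∀ i, ω (ec i) x = 0) ∧ (∀ i, ω (fc i) x = 0)) := by
      intro x
      rw [hWpdef, Submodule.mem_map]
      constructor
      · rintro ⟨y, hyker, rfl⟩
        have h := LinearMap.mem_ker.mp hyker
        rw [hΦapp] at h
        refine ⟨y.2, fun i => ?_, fun i => ?_⟩
        · have := congrFun (congrArg Prod.fst h) i
          simpa using this
        · have := congrFun (congrArg Prod.snd h) i
          simpa using this
      · rintro ⟨hxW, h1, h2⟩
        refine ⟨⟨x, hxW⟩, LinearMap.mem_ker.mpr ?_, rfl⟩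
        rw [hΦapp]
        refine Prod.ext ?_ ?_
        · funext i; simpa using h1 i
        · funext i; simpa using h2 i
    have hrkWp : Module.finrank K Wp + 2 * m = Module.finrank K W := by
      have h1 := LinearMap.finrank_range_add_finrank_ker Φ
      rw [hΦsurj] at h1
      have h2 : Module.finrank K (⊤ : Submodule K ((Fin m → K) × (Fin m → K))) = 2 * m := by
        rw [finrank_top, Module.finrank_prod, Module.finrank_pi, Fintype.card_fin]
        ring
      rw [h2] at h1
      rw [hWpdef, Submodule.finrank_map_subtype_eq]
      omega
    -- invariants for Wp
    have hTWp : ∀ x ∈ Wp, T x ∈ Wp := by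
      intro x hx
      obtain ⟨hxW, h1, h2⟩ := (hWpmem x).mp hx
      refine (hWpmem _).mpr ⟨hTW x hxW, fun i => ?_, fun i => ?_⟩
      · rw [← hT (ec i) x, act_e i, map_sum, LinearMap.sum_apply]
        apply Finset.sum_eq_zero
        intro i' _
        rw [map_smul, LinearMap.smul_apply, h1 i', smul_zero]
      · rw [← hT (fc i) x, act_f i, map_sum, LinearMap.sum_apply]
        apply Finset.sum_eq_zero
        intro i' _
        rw [map_smul, LinearMap.smul_apply, h2 i', smul_zero]
    have hndWp : ∀ x ∈ Wp, (∀ y ∈ Wp, ω x y = 0) → x = 0 := by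
      intro x hx hxy
      obtain ⟨hxW, hxe, hxf⟩ := (hWpmem x).mp hx
      have hxe' : ∀ i, ω x (ec i) = 0 := by
        intro i; rw [hskew, hxe i, neg_zero]
      have hxf' : ∀ i, ω x (fc i) = 0 := by
        intro i; rw [hskew, hxf i, neg_zero]
      apply hnd x hxW
      intro z hzW
      set z' : V := z - (∑ j, (ω (ec j) z) • fc j) + ∑ j, (ω (fc j) z) • ec j with hz'def
      have hz'Wp : z' ∈ Wp := by
        refine (hWpmem _).mpr ⟨?_, fun i => ?_, fun i => ?_⟩
        · exact Submodule.add_mem _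
            (Submodule.sub_mem _ hzW
              (Submodule.sum_mem _ fun j _ => Submodule.smul_mem _ _ (hfcW j)))
            (Submodule.sum_mem _ fun j _ => Submodule.smul_mem _ _ (hecW j))
        · rw [hz'def, map_add, map_sub, map_sum, map_sum]
          simp only [map_smul, smul_eq_mul, gram_ef, gram_ee, mul_ite, mul_one, mul_zero]
          simp
        · rw [hz'def, map_add, map_sub, map_sum, map_sum]
          simp only [map_smul, smul_eq_mul, gram_ff, gram_fe, mul_ite, mul_one, mul_zero,
            mul_neg]
          simp
      have hzz : z = z' + (∑ j, (ω (ec j) z) • fc j) - ∑ j, (ω (fc j) z) • ec j := by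
        rw [hz'def]; abel
      rw [hzz, map_sub, map_add, hxy z' hz'Wp, map_sum, map_sum]
      simp only [map_smul, smul_eq_mul, hxe', hxf', mul_zero]
      simp
    have hsuprWp : ∀ x ∈ Wp, x ∈ ⨆ μ : K, (Wp ⊓ T.maxGenEigenspace μ) := by
      intro x hx
      obtain ⟨hxW, hxe, hxf⟩ := (hWpmem x).mp hx
      obtain ⟨g, hg, hgsum⟩ := (Submodule.mem_iSup_iff_exists_finsupp _ x).mp (hsupr x hxW)
      have hecg : ∀ (i : Fin m) (mu : K), mu ≠ l → ω (ec i) (g mu) = 0 := fun i mu hmu =>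
        hOrth mu hmu _ (Submodule.mem_inf.mp (hecWl i)).2 _ (Submodule.mem_inf.mp (hg mu)).2
      have hfcg : ∀ (i : Fin m) (mu : K), mu ≠ l → ω (fc i) (g mu) = 0 := fun i mu hmu =>
        hOrth mu hmu _ (Submodule.mem_inf.mp (hfcWl i)).2 _ (Submodule.mem_inf.mp (hg mu)).2
      have hsum_e : ∀ i, ω (ec i) (g l) = 0 := by
        intro i
        have h := hxe i
        rw [← hgsum, map_finsuppSum, Finsupp.sum] at h
        by_cases hls : l ∈ g.support
        · rw [Finset.sum_eq_single_of_mem l hls (fun b _ hbl => hecg i b hbl)] at h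
          exact h
        · rw [Finsupp.notMem_support_iff.mp hls, map_zero]
      have hsum_f : ∀ i, ω (fc i) (g l) = 0 := by
        intro i
        have h := hxf i
        rw [← hgsum, map_finsuppSum, Finsupp.sum] at h
        by_cases hls : l ∈ g.support
        · rw [Finset.sum_eq_single_of_mem l hls (fun b _ hbl => hfcg i b hbl)] at h
          exact h
        · rw [Finsupp.notMem_support_iff.mp hls, map_zero]
      refine (Submodule.mem_iSup_iff_exists_finsupp _ x).mpr ⟨g, fun mu => ?_, hgsum⟩
      refine Submodule.mem_inf.mpr ⟨?_, (Submodule.mem_inf.mp (hg mu)).2⟩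
      refine (hWpmem _).mpr ⟨(Submodule.mem_inf.mp (hg mu)).1, fun i => ?_, fun i => ?_⟩
      · by_cases hmu : mu = l
        · rw [hmu]; exact hsum_e i
        · exact hecg i mu hmu
      · by_cases hmu : mu = l
        · rw [hmu]; exact hsum_f i
        · exact hfcg i mu hmu
    obtain ⟨k', B', e', f', hk', hJ', heW', hfW', gee', gff', gef', acte', actf'⟩ :=
      ih Wp (by omega) hTWp hndWp hsuprWp
    have hWpW : ∀ x ∈ Wp, x ∈ W := fun x hx => ((hWpmem x).mp hx).1
    have hcoe : ∀ s : Fin m ⊕ Fin k', ((finSumFinEquiv s : Fin (m + k')) : ℕ)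
        = Sum.elim (fun a : Fin m => (a : ℕ)) (fun b : Fin k' => m + (b : ℕ)) s := by
      rintro (a | b) <;> simp
    refine ⟨m + k',
      Matrix.of (fun i j => Matrix.fromBlocks Jm 0 0 B'
        (finSumFinEquiv.symm i) (finSumFinEquiv.symm j)),
      (fun i => Sum.elim ec e' (finSumFinEquiv.symm i)),
      (fun i => Sum.elim fc f' (finSumFinEquiv.symm i)),
      by omega, ?_, ?_, ?_, ?_, ?_, ?_, ?_, ?_⟩
    · constructor
      · intro i j h1 h2
        obtain ⟨s, rfl⟩ := finSumFinEquiv.surjective i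
        obtain ⟨t, rfl⟩ := finSumFinEquiv.surjective j
        simp only [hcoe] at h1 h2
        simp only [Matrix.of_apply, Equiv.symm_apply_apply]
        rcases s with a | a <;> rcases t with b | b
        · simp only [Sum.elim_inl] at h1 h2
          simp only [Matrix.fromBlocks_apply₁₁, hJmdef, Matrix.of_apply]
          rw [if_neg (by omega), if_neg (by omega)]
        · simp
        · simp
        · simp only [Sum.elim_inr] at h1 h2
          simp only [Matrix.fromBlocks_apply₂₂]
          exact hJ'.1 a b (by omega) (by omega)
      · intro i j h1
        obtain ⟨s, rfl⟩ := finSumFinEquiv.surjective i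
        obtain ⟨t, rfl⟩ := finSumFinEquiv.surjective j
        simp only [hcoe] at h1
        simp only [Matrix.of_apply, Equiv.symm_apply_apply]
        rcases s with a | a <;> rcases t with b | b
        · simp only [Sum.elim_inl] at h1
          right
          constructor
          · simp only [Matrix.fromBlocks_apply₁₁, hJmdef, Matrix.of_apply]
            rw [if_neg (by omega), if_pos (by omega)]
          · simp [hJmdef]
        · left; simp
        · left; simp
        · simp only [Sum.elim_inl, Sum.elim_inr] at h1
          simp only [Matrix.fromBlocks_apply₂₂]
          exact hJ'.2 a b (by omega)
    · intro i
      obtain ⟨s, rfl⟩ := finSumFinEquiv.surjective i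
      simp only [Equiv.symm_apply_apply]
      rcases s with a | a <;> simp only [Sum.elim_inl, Sum.elim_inr]
      · exact hecW a
      · exact hWpW _ (heW' a)
    · intro i
      obtain ⟨s, rfl⟩ := finSumFinEquiv.surjective i
      simp only [Equiv.symm_apply_apply]
      rcases s with a | a <;> simp only [Sum.elim_inl, Sum.elim_inr]
      · exact hfcW a
      · exact hWpW _ (hfW' a)
    · intro i j
      obtain ⟨s, rfl⟩ := finSumFinEquiv.surjective i
      obtain ⟨t, rfl⟩ := finSumFinEquiv.surjective j
      simp only [Equiv.symm_apply_apply]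
      rcases s with a | a <;> rcases t with b | b <;>
        simp only [Sum.elim_inl, Sum.elim_inr]
      · exact gram_ee a b
      · exact ((hWpmem _).mp (heW' b)).2.1 a
      · rw [hskew, ((hWpmem _).mp (heW' a)).2.1 b, neg_zero]
      · exact gee' a b
    · intro i j
      obtain ⟨s, rfl⟩ := finSumFinEquiv.surjective i
      obtain ⟨t, rfl⟩ := finSumFinEquiv.surjective j
      simp only [Equiv.symm_apply_apply]
      rcases s with a | a <;> rcases t with b | b <;>
        simp only [Sum.elim_inl, Sum.elim_inr]
      · exact gram_ff a b
      · exact ((hWpmem _).mp (hfW' b)).2.2 a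
      · rw [hskew, ((hWpmem _).mp (hfW' a)).2.2 b, neg_zero]
      · exact gff' a b
    · intro i j
      obtain ⟨s, rfl⟩ := finSumFinEquiv.surjective i
      obtain ⟨t, rfl⟩ := finSumFinEquiv.surjective j
      simp only [Equiv.symm_apply_apply]
      rcases s with a | a <;> rcases t with b | b <;>
        simp only [Sum.elim_inl, Sum.elim_inr]
      · have hiff : (finSumFinEquiv (Sum.inl a : Fin m ⊕ Fin k')
            = finSumFinEquiv (Sum.inl b)) ↔ a = b := by
          rw [Equiv.apply_eq_iff_eq, Sum.inl.injEq]
        rw [if_congr hiff rfl rfl]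
        exact gram_ef a b
      · rw [if_neg (fun h => by simpa using finSumFinEquiv.injective h)]
        exact ((hWpmem _).mp (hfW' b)).2.1 a
      · rw [if_neg (fun h => by simpa using finSumFinEquiv.injective h), hskew,
          ((hWpmem _).mp (heW' a)).2.2 b, neg_zero]
      · have hiff : (finSumFinEquiv (Sum.inr a : Fin m ⊕ Fin k')
            = finSumFinEquiv (Sum.inr b)) ↔ a = b := by
          rw [Equiv.apply_eq_iff_eq, Sum.inr.injEq]
        rw [if_congr hiff rfl rfl]
        exact gef' a b
    · intro j
      obtain ⟨t, rfl⟩ := finSumFinEquiv.surjective j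
      rw [← Equiv.sum_comp (finSumFinEquiv : Fin m ⊕ Fin k' ≃ Fin (m + k'))]
      simp only [Matrix.of_apply, Equiv.symm_apply_apply]
      rw [Fintype.sum_sum_type]
      rcases t with c | c
      · simp only [Sum.elim_inl, Matrix.fromBlocks_apply₁₁, Matrix.fromBlocks_apply₂₁,
          Sum.elim_inr, Matrix.zero_apply, zero_smul, Finset.sum_const_zero, add_zero]
        exact act_e c
      · simp only [Sum.elim_inl, Matrix.fromBlocks_apply₁₂, Matrix.fromBlocks_apply₂₂,
          Sum.elim_inr, Matrix.zero_apply, zero_smul, Finset.sum_const_zero, zero_add]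
        exact acte' c
    · intro j
      obtain ⟨t, rfl⟩ := finSumFinEquiv.surjective j
      rw [← Equiv.sum_comp (finSumFinEquiv : Fin m ⊕ Fin k' ≃ Fin (m + k'))]
      simp only [Matrix.of_apply, Equiv.symm_apply_apply]
      rw [Fintype.sum_sum_type]
      rcases t with c | c
      · simp only [Sum.elim_inl, Matrix.fromBlocks_apply₁₁, Matrix.fromBlocks_apply₁₂,
          Sum.elim_inr, Matrix.zero_apply, zero_smul, Finset.sum_const_zero, add_zero]
        exact act_f c
      · simp only [Sum.elim_inl, Matrix.fromBlocks_apply₂₁, Matrix.fromBlocks_apply₂₂,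
          Sum.elim_inr, Matrix.zero_apply, zero_smul, Finset.sum_const_zero, zero_add]
        exact actf' c

end Main

theorem symplectic_spectral_matrix_split
    {K : Type*} [Field K] (hchar : (2 : K) ≠ 0) (n : ℕ) (hn : 0 < n)
    (A : Matrix (Fin n ⊕ Fin n) (Fin n ⊕ Fin n) K)
    (Ω : Matrix (Fin n ⊕ Fin n) (Fin n ⊕ Fin n) K)
    (hΩ : Ω = Matrix.fromBlocks 0 1 (-1) 0)
    (hA : A.transpose = Ω * A * Ω⁻¹)
    (hsplit : Polynomial.Splits A.charpoly) :
    ∃ C : Matrix (Fin n ⊕ Fin n) (Fin n ⊕ Fin n) K,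
      C.transpose * Ω * C = Ω ∧
      ∃ B : Matrix (Fin n) (Fin n) K, IsJordanNormalForm B ∧
        C⁻¹ * A * C = Matrix.fromBlocks B 0 0 B.transpose := by
  classical
  have hΩ2 : Ω * (-Ω) = 1 := by
    rw [hΩ]
    ext i j
    rcases i with i | i <;> rcases j with j | j <;>
      simp [Matrix.fromBlocks_multiply, Matrix.one_apply]
  have hΩnegΩ : (-Ω) * Ω = 1 := by
    rw [neg_mul]
    rw [mul_neg] at hΩ2
    exact hΩ2
  have hΩinv : Ω⁻¹ = -Ω := Matrix.inv_eq_right_inv hΩ2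
  have hΩT : Ω.transpose = -Ω := by
    rw [hΩ]
    ext i j
    rcases i with i | i <;> rcases j with j | j <;>
      simp [Matrix.fromBlocks, Matrix.one_apply, eq_comm]
  have hAΩ : A.transpose * Ω = Ω * A := by
    rw [hA, hΩinv, Matrix.mul_assoc, Matrix.mul_assoc, hΩnegΩ, Matrix.mul_one]
  set T : Module.End K ((Fin n ⊕ Fin n) → K) := Matrix.toLinAlgEquiv' A with hTdef
  have hTx : ∀ x, T x = A.mulVec x := fun x => Matrix.toLinAlgEquiv'_apply A x
  set ω : ((Fin n ⊕ Fin n) → K) →ₗ[K] ((Fin n ⊕ Fin n) → K) →ₗ[K] K :=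
    LinearMap.mk₂ K (fun x y => dotProduct x (Ω.mulVec y))
      (fun x x' y => add_dotProduct _ _ _)
      (fun c x y => smul_dotProduct _ _ _)
      (fun x y y' => by
        show dotProduct x (Ω.mulVec (y + y'))
          = dotProduct x (Ω.mulVec y) + dotProduct x (Ω.mulVec y')
        rw [Matrix.mulVec_add, dotProduct_add])
      (fun c x y => by
        show dotProduct x (Ω.mulVec (c • y)) = c • dotProduct x (Ω.mulVec y)
        rw [Matrix.mulVec_smul, dotProduct_smul])
      with hωdef
  have hωapp : ∀ x y, ω x y = dotProduct x (Ω.mulVec y) := fun x y => rfl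
  have hskew : ∀ x y, ω x y = - ω y x := by
    intro x y
    rw [hωapp, hωapp, Matrix.dotProduct_mulVec, ← Matrix.mulVec_transpose, hΩT,
      Matrix.neg_mulVec, neg_dotProduct, dotProduct_comm]
  have hsa : ∀ x y, ω (T x) y = ω x (T y) := by
    intro x y
    rw [hωapp, hωapp, hTx, hTx, Matrix.mulVec_mulVec, Matrix.dotProduct_mulVec,
      Matrix.dotProduct_mulVec]
    have hvm : Matrix.vecMul (A.mulVec x) Ω = Matrix.vecMul x (Ω * A) := by
      have h1 : A.mulVec x = Matrix.vecMul x A.transpose := by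
        have := Matrix.mulVec_transpose A.transpose x
        rwa [Matrix.transpose_transpose] at this
      rw [h1, Matrix.vecMul_vecMul, hAΩ]
    rw [hvm]
  have hnd : ∀ x : (Fin n ⊕ Fin n) → K, (∀ y, ω x y = 0) → x = 0 := by
    intro x hx
    have h1 : Matrix.vecMul x Ω = 0 := by
      funext j
      have h := hx (Pi.single j 1)
      rw [hωapp, Matrix.dotProduct_mulVec] at h
      simpa using h
    have h2 := congrArg (fun v => Matrix.vecMul v (-Ω)) h1
    simpa [Matrix.vecMul_vecMul, hΩ2] using h2
  have hT0 : (Polynomial.aeval T) A.charpoly = 0 := by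
    have h := Polynomial.aeval_algHom_apply
      ((Matrix.toLinAlgEquiv' (R := K) (n := Fin n ⊕ Fin n)).toAlgHom) A A.charpoly
    have h2 : (Polynomial.aeval T) A.charpoly
        = Matrix.toLinAlgEquiv' ((Polynomial.aeval A) A.charpoly) := h
    rw [h2, Matrix.aeval_self_charpoly, map_zero]
  have hsupr : ∀ x : (Fin n ⊕ Fin n) → K,
      x ∈ ⨆ μ : K, ((⊤ : Submodule K ((Fin n ⊕ Fin n) → K)) ⊓ T.maxGenEigenspace μ) := by
    intro x
    have hmem := mem_iSup_maxGenEigenspace_of_aeval T A.charpoly.natDegree A.charpoly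
      le_rfl (Matrix.charpoly_monic A).ne_zero hsplit x (by rw [hT0]; rfl)
    simpa [top_inf_eq] using hmem
  obtain ⟨k, B, e, f, hk, hJ, heW, hfW, gee, gff, gef, acte, actf⟩ :=
    symp_main hchar ω hskew T hsa
      (Module.finrank K ((Fin n ⊕ Fin n) → K)) ⊤ (finrank_top K _).le
      (fun x _ => trivial) (fun x _ hx => hnd x (fun y => hx y trivial))
      (fun x _ => hsupr x)
  have hkn : k = n := by
    have h1 : Module.finrank K (⊤ : Submodule K ((Fin n ⊕ Fin n) → K))
        = Module.finrank K ((Fin n ⊕ Fin n) → K) := finrank_top K _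
    have h2 : Module.finrank K ((Fin n ⊕ Fin n) → K) = Fintype.card (Fin n ⊕ Fin n) :=
      Module.finrank_pi K
    have h3 : Fintype.card (Fin n ⊕ Fin n) = n + n := by simp
    omega
  subst hkn
  set C : Matrix (Fin k ⊕ Fin k) (Fin k ⊕ Fin k) K :=
    Matrix.of (fun i p => Sum.elim (fun j => e j i) (fun j => f j i) p) with hCdef
  have hcol : ∀ p q, (C.transpose * Ω * C) p q
      = ω (fun i => C i p) (fun i => C i q) := by
    intro p q
    rw [hωapp]
    simp only [Matrix.mul_apply, Matrix.transpose_apply, Matrix.mulVec, dotProduct,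
      Finset.sum_mul, Finset.mul_sum]
    rw [Finset.sum_comm]
    apply Finset.sum_congr rfl
    intro s _
    apply Finset.sum_congr rfl
    intro r _
    ring
  have hsymp : C.transpose * Ω * C = Ω := by
    ext p q
    rw [hcol]
    have hΩe : Ω = Matrix.fromBlocks 0 1 (-1) 0 := hΩ
    rcases p with p | p <;> rcases q with q | q
    · have h1 : (fun i => C i (Sum.inl p)) = e p := rfl
      have h2 : (fun i => C i (Sum.inl q)) = e q := rfl
      rw [h1, h2, gee p q, hΩe]
      simp
    · have h1 : (fun i => C i (Sum.inl p)) = e p := rfl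
      have h2 : (fun i => C i (Sum.inr q)) = f q := rfl
      rw [h1, h2, gef p q, hΩe]
      simp [Matrix.one_apply]
    · have h1 : (fun i => C i (Sum.inr p)) = f p := rfl
      have h2 : (fun i => C i (Sum.inl q)) = e q := rfl
      rw [h1, h2, hskew, gef q p, hΩe]
      simp [Matrix.one_apply, eq_comm]
    · have h1 : (fun i => C i (Sum.inr p)) = f p := rfl
      have h2 : (fun i => C i (Sum.inr q)) = f q := rfl
      rw [h1, h2, gff p q, hΩe]
      simp
  set D : Matrix (Fin k ⊕ Fin k) (Fin k ⊕ Fin k) K :=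
    Matrix.fromBlocks B 0 0 B.transpose with hDdef
  have hAC : A * C = C * D := by
    ext i q
    rw [Matrix.mul_apply, Matrix.mul_apply]
    rcases q with q | q
    · have hL : ∑ r, A i r * C r (Sum.inl q) = (T (e q)) i := by
        rw [hTx]
        rfl
      rw [hL, acte q, Finset.sum_apply, Fintype.sum_sum_type]
      simp only [Pi.smul_apply, smul_eq_mul, hDdef, Matrix.fromBlocks_apply₁₁,
        Matrix.fromBlocks_apply₂₁, Matrix.zero_apply, mul_zero, Finset.sum_const_zero,
        add_zero, hCdef, Matrix.of_apply, Sum.elim_inl, Sum.elim_inr]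
      apply Finset.sum_congr rfl
      intro j _
      ring
    · have hL : ∑ r, A i r * C r (Sum.inr q) = (T (f q)) i := by
        rw [hTx]
        rfl
      rw [hL, actf q, Finset.sum_apply, Fintype.sum_sum_type]
      simp only [Pi.smul_apply, smul_eq_mul, hDdef, Matrix.fromBlocks_apply₁₂,
        Matrix.fromBlocks_apply₂₂, Matrix.zero_apply, mul_zero, Finset.sum_const_zero,
        zero_add, hCdef, Matrix.of_apply, Sum.elim_inl, Sum.elim_inr,
        Matrix.transpose_apply]
      apply Finset.sum_congr rfl
      intro j _
      ring
  have hΩdet : Ω.det ≠ 0 := by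
    intro h
    have hdet := congrArg Matrix.det hΩ2
    rw [Matrix.det_mul, Matrix.det_one, h, zero_mul] at hdet
    exact zero_ne_one hdet
  have hCdet : IsUnit C.det := by
    have hdet := congrArg Matrix.det hsymp
    rw [Matrix.det_mul, Matrix.det_mul, Matrix.det_transpose] at hdet
    have hCC : C.det * C.det = 1 := by
      have h2 : Ω.det * (C.det * C.det) = Ω.det * 1 := by
        rw [mul_one]
        linear_combination hdet
      exact mul_left_cancel₀ hΩdet h2
    exact IsUnit.of_mul_eq_one _ hCC
  refine ⟨C, hsymp, B, hJ, ?_⟩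
  rw [Matrix.mul_assoc, hAC, ← Matrix.mul_assoc, Matrix.nonsing_inv_mul C hCdet,
    Matrix.one_mul]
end

section
/- Let K be a perfect field with char K ≠ 2, n ≥ 1, and Ω = [[0, I_n],[−I_n, 0]] ∈ M_{2n×2n}(K). If A ∈ M_{2n×2n}(K) satisfies Aᵀ = Ω A Ω⁻¹, then there exists a symplectic matrix C (Cᵀ Ω C = Ω) such that C⁻¹ A C = [[B, 0],[0, Bᵀ]] for some B ∈ M_{n×n}(K). -/
open Polynomial Module

namespace SymplAux

variable {K : Type*} [Field K] {V : Type*} [AddCommGroup V] [Module K V]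

theorem aeval_mul_apply (f : Module.End K V) (p q : K[X]) (v : V) :
    Polynomial.aeval f (p * q) v = Polynomial.aeval f p (Polynomial.aeval f q v) := by
  rw [map_mul]; rfl

/-- The annihilator ideal of a vector under an endomorphism. -/
def annI (f : Module.End K V) (v : V) : Ideal K[X] where
  carrier := {p | Polynomial.aeval f p v = 0}
  zero_mem' := by simp
  add_mem' := by
    intro a b ha hb
    simp only [Set.mem_setOf_eq, map_add, LinearMap.add_apply] at *
    rw [ha, hb, add_zero]
  smul_mem' := by
    intro c p hp
    simp only [Set.mem_setOf_eq, smul_eq_mul] at *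
    rw [aeval_mul_apply, hp, map_zero]

theorem mem_annI {f : Module.End K V} {v : V} {p : K[X]} :
    p ∈ annI f v ↔ Polynomial.aeval f p v = 0 := Iff.rfl

variable [FiniteDimensional K V]

theorem minpoly_mem_annI (f : Module.End K V) (v : V) : minpoly K f ∈ annI f v := by
  rw [mem_annI, minpoly.aeval]; rfl

noncomputable def ordP (f : Module.End K V) (v : V) : K[X] :=
  haveI := IsPrincipalIdealRing.principal (annI f v)
  Submodule.IsPrincipal.generator (annI f v)

theorem ordP_dvd_iff {f : Module.End K V} {v : V} {p : K[X]} :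
    ordP f v ∣ p ↔ Polynomial.aeval f p v = 0 := by
  haveI := IsPrincipalIdealRing.principal (annI f v)
  rw [← mem_annI (f := f) (v := v)]
  exact (Submodule.IsPrincipal.mem_iff_generator_dvd (annI f v)).symm

theorem aeval_ordP (f : Module.End K V) (v : V) : Polynomial.aeval f (ordP f v) v = 0 :=
  ordP_dvd_iff.mp dvd_rfl

theorem ordP_dvd_minpoly (f : Module.End K V) (v : V) : ordP f v ∣ minpoly K f :=
  ordP_dvd_iff.mpr (minpoly_mem_annI f v)

theorem minpoly_ne_zero (f : Module.End K V) : minpoly K f ≠ 0 :=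
  minpoly.ne_zero (LinearMap.isIntegral f)

theorem ordP_ne_zero (f : Module.End K V) (v : V) : ordP f v ≠ 0 := by
  intro h
  have := ordP_dvd_minpoly f v
  rw [h] at this
  exact minpoly_ne_zero f (eq_zero_of_zero_dvd this)

theorem exists_max_order (f : Module.End K V) :
    ∃ v : V, ∀ p : K[X], Polynomial.aeval f p v = 0 → Polynomial.aeval f p = 0 := by
  classical
  set m := minpoly K f with hm
  have hm0 : m ≠ 0 := minpoly_ne_zero f
  -- pick v maximizing the degree of ordP
  have hbdd : BddAbove (Set.range fun v : V => (ordP f v).natDegree) := by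
    refine ⟨m.natDegree, ?_⟩
    rintro x ⟨v, rfl⟩
    exact Polynomial.natDegree_le_natDegree (Polynomial.degree_le_of_dvd (ordP_dvd_minpoly f v) hm0)
  obtain ⟨v, hv⟩ : ∃ v : V, (ordP f v).natDegree
      = sSup (Set.range fun v : V => (ordP f v).natDegree) :=
    Nat.sSup_mem (Set.range_nonempty _) hbdd
  have hmax : ∀ u : V, (ordP f u).natDegree ≤ (ordP f v).natDegree := by
    intro u; rw [hv]; exact le_csSup hbdd ⟨u, rfl⟩
  -- claim : m ∣ ordP f v
  have hclaim : m ∣ ordP f v := by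
    by_contra hnd
    set g := ordP f v with hg
    have hg0 : g ≠ 0 := ordP_ne_zero f v
    obtain ⟨c, hc⟩ : g ∣ m := ordP_dvd_minpoly f v
    have hc0 : c ≠ 0 := by rintro rfl; rw [mul_zero] at hc; exact hm0 hc
    have hcu : ¬IsUnit c := by
      intro hu
      obtain ⟨u, rfl⟩ := hu
      exact hnd ⟨(u⁻¹ : K[X]ˣ), by rw [hc, mul_assoc, Units.mul_inv, mul_one]⟩
    obtain ⟨π, hπ, hπc⟩ := WfDvdMonoid.exists_irreducible_factor hcu hc0
    have hπ0 : (π : K[X]) ≠ 0 := hπ.ne_zero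
    have hπd : 0 < π.natDegree := hπ.natDegree_pos
    obtain ⟨k, s, hπs, hgs⟩ := WfDvdMonoid.max_power_factor hg0 hπ
    obtain ⟨e, w, hπw, hmw⟩ := WfDvdMonoid.max_power_factor hm0 hπ
    have hs0 : s ≠ 0 := by rintro rfl; rw [mul_zero] at hgs; exact hg0 hgs
    have hw0 : w ≠ 0 := by rintro rfl; rw [mul_zero] at hmw; exact hm0 hmw
    have hke : k + 1 ≤ e := by
      by_contra hlt
      push_neg at hlt
      have h1 : π ^ (k + 1) ∣ m := by
        obtain ⟨c', hc'⟩ := hπc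
        refine ⟨s * c', ?_⟩
        rw [hc, hgs, hc', pow_succ]
        ring
      have h2 : π ^ (k+1) ∣ π ^ e * w := by rwa [← hmw]
      have h3 : π ^ e * π ∣ π ^ e * w := by
        refine dvd_trans ?_ h2
        refine ⟨π ^ (k - e), ?_⟩
        rw [← pow_succ, ← pow_add]
        congr 1
        omega
      have := (mul_dvd_mul_iff_left (pow_ne_zero e hπ0)).mp h3
      exact hπw this
    have he1 : 1 ≤ e := le_trans (Nat.le_add_left 1 k) hke
    set a := Polynomial.aeval f (π ^ k) v with ha
    have hsa : Polynomial.aeval f s a = 0 := by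
      have h1 : Polynomial.aeval f (s * π ^ k) v = 0 := by
        rw [mul_comm s, ← hgs, hg]
        exact aeval_ordP f v
      rw [ha, ← aeval_mul_apply]
      exact h1
    have hsmin : ∀ q : K[X], Polynomial.aeval f q a = 0 → s ∣ q := by
      intro q hq
      rw [ha, ← aeval_mul_apply] at hq
      have h1 : g ∣ q * π ^ k := by rw [hg]; exact ordP_dvd_iff.mpr hq
      rw [hgs, mul_comm q (π ^ k)] at h1
      exact (mul_dvd_mul_iff_left (pow_ne_zero k hπ0)).mp h1
    -- choose u not killed by π^(e-1) * w
    have hop : Polynomial.aeval f (π ^ (e-1) * w) ≠ 0 := by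
      intro h0
      have hdvd : m ∣ π ^ (e-1) * w := minpoly.dvd K f h0
      have hne : π ^ (e-1) * w ≠ 0 := mul_ne_zero (pow_ne_zero _ hπ0) hw0
      have hdeg := Polynomial.natDegree_le_of_dvd hdvd hne
      rw [hmw, Polynomial.natDegree_mul (pow_ne_zero _ hπ0) hw0,
        Polynomial.natDegree_mul (pow_ne_zero _ hπ0) hw0,
        Polynomial.natDegree_pow, Polynomial.natDegree_pow] at hdeg
      have h7 : (e - 1) * π.natDegree + π.natDegree = e * π.natDegree := by
        have h8 : e - 1 + 1 = e := by omega
        calc (e-1) * π.natDegree + π.natDegree = (e-1+1) * π.natDegree := by ring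
          _ = e * π.natDegree := by rw [h8]
      omega
    have : ∃ u : V, Polynomial.aeval f (π ^ (e-1) * w) u ≠ 0 := by
      by_contra hall
      push_neg at hall
      exact hop (LinearMap.ext hall)
    obtain ⟨u, hu⟩ := this
    set b := Polynomial.aeval f w u with hb
    have hπeb : Polynomial.aeval f (π ^ e) b = 0 := by
      rw [hb, ← aeval_mul_apply, ← hmw]
      have := minpoly.aeval K f
      rw [← hm] at this
      rw [this]; rfl
    have hbord : π ^ e ∣ ordP f b := by
      have h1 : ordP f b ∣ π ^ e := ordP_dvd_iff.mpr hπeb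
      obtain ⟨j, hj, hassoc⟩ := (dvd_prime_pow hπ.prime e).mp h1
      rcases Nat.lt_or_ge j e with hje | hje
      · exfalso
        have h2 : ordP f b ∣ π ^ (e-1) := by
          refine dvd_trans hassoc.dvd ?_
          exact pow_dvd_pow π (by omega)
        have h3 : Polynomial.aeval f (π ^ (e-1)) b = 0 := ordP_dvd_iff.mp h2
        rw [hb, ← aeval_mul_apply] at h3
        exact hu h3
      · have : j = e := le_antisymm hj hje
        subst this
        exact hassoc.symm.dvd
    have hcop : IsCoprime s (π ^ e) := by
      have h1 : IsCoprime π s := (hπ.coprime_iff_not_dvd).mpr hπs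
      exact (h1.symm.pow_right)
    set v' := a + b with hv'
    set h := ordP f v' with hh
    have hh0 : h ≠ 0 := ordP_ne_zero f v'
    have hha : Polynomial.aeval f h v' = 0 := aeval_ordP f v'
    have hsh : s ∣ h := by
      have h1 : Polynomial.aeval f (h * π ^ e) a = 0 := by
        have : Polynomial.aeval f (h * π ^ e) v' = 0 := by
          rw [mul_comm, aeval_mul_apply, hha, map_zero]
        rw [hv', map_add] at this
        have h2 : Polynomial.aeval f (h * π ^ e) b = 0 := by
          rw [aeval_mul_apply, hπeb, map_zero]
        rw [h2, add_zero] at this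
        exact this
      have := hsmin _ h1
      exact hcop.dvd_of_dvd_mul_right this
    have hπh : π ^ e ∣ h := by
      have h1 : Polynomial.aeval f (h * s) b = 0 := by
        have : Polynomial.aeval f (h * s) v' = 0 := by
          rw [mul_comm, aeval_mul_apply, hha, map_zero]
        rw [hv', map_add] at this
        have h2 : Polynomial.aeval f (h * s) a = 0 := by
          rw [aeval_mul_apply, hsa, map_zero]
        rw [h2, zero_add] at this
        exact this
      have h3 : ordP f b ∣ h * s := ordP_dvd_iff.mpr h1
      have h4 : π ^ e ∣ h * s := dvd_trans hbord h3
      exact hcop.symm.dvd_of_dvd_mul_right h4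
    have hsπh : s * π ^ e ∣ h := hcop.mul_dvd hsh hπh
    have hdegh : (s * π ^ e).natDegree ≤ h.natDegree :=
      Polynomial.natDegree_le_of_dvd hsπh hh0
    have hdg : g.natDegree = k * π.natDegree + s.natDegree := by
      rw [hgs, Polynomial.natDegree_mul (pow_ne_zero _ hπ0) hs0, Polynomial.natDegree_pow]
    have hds : (s * π ^ e).natDegree = s.natDegree + e * π.natDegree := by
      rw [Polynomial.natDegree_mul hs0 (pow_ne_zero _ hπ0), Polynomial.natDegree_pow]
    have hfin : h.natDegree ≤ g.natDegree := hmax v'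
    have hlt : g.natDegree < (s * π ^ e).natDegree := by
      rw [hdg, hds]
      have h8 : (k+1) * π.natDegree = k * π.natDegree + π.natDegree := by ring
      have h9 : (k+1) * π.natDegree ≤ e * π.natDegree := Nat.mul_le_mul_right _ hke
      omega
    omega
  -- finish
  refine ⟨v, fun p hp => ?_⟩
  have h1 : ordP f v ∣ p := ordP_dvd_iff.mpr hp
  have h2 : m ∣ p := dvd_trans hclaim h1
  obtain ⟨c, rfl⟩ := h2
  rw [map_mul]
  have := minpoly.aeval K f
  rw [← hm] at this
  rw [this, zero_mul]

end SymplAux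

namespace SymplAux

section Decomp

variable {K : Type*} [Field K]

theorem two_cancel (hchar : (2:K) ≠ 0) {t : K} (h : t = -t) : t = 0 := by
  have h2 : 2 * t = 0 := by
    rw [two_mul]
    nth_rewrite 2 [h]
    exact add_neg_cancel t
  rcases mul_eq_zero.mp h2 with h3 | h3
  · exact absurd h3 hchar
  · exact h3

variable {V : Type*} [AddCommGroup V] [Module K V]

theorem pow_adjoint {ω : LinearMap.BilinForm K V} {f : Module.End K V}
    (hself : ∀ x y, ω (f x) y = ω x (f y)) :
    ∀ (m : ℕ) (x y : V), ω ((f ^ m) x) y = ω x ((f ^ m) y) := by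
  intro m
  induction m with
  | zero => intro x y; simp
  | succ m ih =>
    intro x y
    have hc : f ((f ^ m) y) = (f ^ m) (f y) := by
      rw [← Module.End.mul_apply, ← Module.End.mul_apply, ← pow_succ', pow_succ]
    rw [pow_succ, Module.End.mul_apply, Module.End.mul_apply, ih (f x) y, hself, hc]

theorem aeval_adjoint {ω : LinearMap.BilinForm K V} {f : Module.End K V}
    (hself : ∀ x y, ω (f x) y = ω x (f y)) (p : K[X]) :
    ∀ x y, ω (Polynomial.aeval f p x) y = ω x (Polynomial.aeval f p y) := by
  induction p using Polynomial.induction_on' with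
  | add p q hp hq =>
    intro x y
    simp only [map_add, LinearMap.add_apply, hp, hq]
  | monomial n a =>
    intro x y
    simp only [Polynomial.aeval_monomial, Module.End.mul_apply,
      Module.algebraMap_end_apply, map_smul, LinearMap.smul_apply, smul_eq_mul,
      pow_adjoint hself n]

/-- Evaluation of polynomials in `f` at a fixed vector, as a linear map. -/
noncomputable def polyEval (f : Module.End K V) (x : V) : K[X] →ₗ[K] V where
  toFun p := Polynomial.aeval f p x
  map_add' p q := by simp only [map_add, LinearMap.add_apply]
  map_smul' c p := by simp only [map_smul, LinearMap.smul_apply, RingHom.id_apply]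

/-- The cyclic (f-invariant) subspace generated by a vector. -/
noncomputable def cyc (f : Module.End K V) (x : V) : Submodule K V :=
  LinearMap.range (polyEval f x)

theorem mem_cyc {f : Module.End K V} {x y : V} :
    y ∈ cyc f x ↔ ∃ p : K[X], Polynomial.aeval f p x = y := by
  rw [cyc, LinearMap.mem_range]; rfl

theorem self_mem_cyc (f : Module.End K V) (x : V) : x ∈ cyc f x :=
  mem_cyc.mpr ⟨1, by simp⟩

theorem cyc_invariant {f : Module.End K V} {x y : V} (hy : y ∈ cyc f x) :
    f y ∈ cyc f x := by
  obtain ⟨p, rfl⟩ := mem_cyc.mp hy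
  exact mem_cyc.mpr ⟨Polynomial.X * p, by rw [aeval_mul_apply, Polynomial.aeval_X]⟩

theorem cyc_isotropic (hchar : (2:K) ≠ 0) {ω : LinearMap.BilinForm K V}
    (halt : ω.IsAlt) {f : Module.End K V}
    (hself : ∀ x y, ω (f x) y = ω x (f y)) (x : V) :
    ∀ y ∈ cyc f x, ∀ z ∈ cyc f x, ω y z = 0 := by
  intro y hy z hz
  obtain ⟨p, rfl⟩ := mem_cyc.mp hy
  obtain ⟨q, rfl⟩ := mem_cyc.mp hz
  have h1 : ω (Polynomial.aeval f p x) (Polynomial.aeval f q x)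
      = ω x (Polynomial.aeval f (p * q) x) := by
    rw [aeval_adjoint hself p, ← aeval_mul_apply]
  have h2 : ω (Polynomial.aeval f q x) (Polynomial.aeval f p x)
      = ω x (Polynomial.aeval f (p * q) x) := by
    rw [aeval_adjoint hself q, ← aeval_mul_apply, mul_comm]
  have h3 : ω (Polynomial.aeval f p x) (Polynomial.aeval f q x)
      = -ω (Polynomial.aeval f q x) (Polynomial.aeval f p x) :=
    (LinearMap.IsAlt.neg halt _ _).symm
  rw [h1, h2] at h3
  rw [h1]
  exact two_cancel hchar h3

theorem decomp_trivial {V₂ : Type*} [AddCommGroup V₂] [Module K V₂]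
    (hV : Subsingleton V₂) (ω : LinearMap.BilinForm K V₂) (f : Module.End K V₂) :
    ∃ L M : Submodule K V₂,
      (∀ x ∈ L, f x ∈ L) ∧ (∀ x ∈ M, f x ∈ M) ∧
      (∀ x ∈ L, ∀ y ∈ L, ω x y = 0) ∧ (∀ x ∈ M, ∀ y ∈ M, ω x y = 0) ∧
      IsCompl L M := by
  have hbot : (⊥ : Submodule K V₂) = ⊤ := by
    ext x
    simp only [Submodule.mem_bot, Submodule.mem_top, iff_true]
    exact Subsingleton.elim x 0
  refine ⟨⊥, ⊥, ?_, ?_, ?_, ?_, ?_⟩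
  · intro x hx
    rw [Submodule.mem_bot] at hx
    subst hx
    rw [map_zero]
    exact Submodule.zero_mem ⊥
  · intro x hx
    rw [Submodule.mem_bot] at hx
    subst hx
    rw [map_zero]
    exact Submodule.zero_mem ⊥
  · intro x hx y _
    rw [Submodule.mem_bot] at hx
    subst hx
    simp
  · intro x hx y _
    rw [Submodule.mem_bot] at hx
    subst hx
    simp
  · exact ⟨disjoint_bot_left, codisjoint_iff.mpr (by rw [sup_bot_eq]; exact hbot)⟩

theorem decomp (hchar : (2:K) ≠ 0) :
    ∀ (N : ℕ) (V₂ : Type v) [AddCommGroup V₂] [Module K V₂] [FiniteDimensional K V₂]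
      (ω : LinearMap.BilinForm K V₂) (f : Module.End K V₂),
      Module.finrank K V₂ ≤ N → ω.IsAlt → ω.Nondegenerate →
      (∀ x y, ω (f x) y = ω x (f y)) →
      ∃ L M : Submodule K V₂,
        (∀ x ∈ L, f x ∈ L) ∧ (∀ x ∈ M, f x ∈ M) ∧
        (∀ x ∈ L, ∀ y ∈ L, ω x y = 0) ∧ (∀ x ∈ M, ∀ y ∈ M, ω x y = 0) ∧
        IsCompl L M := by
  intro N
  induction N with
  | zero =>
    intro V₂ _ _ _ ω f hrank _ _ _
    have : Module.finrank K V₂ = 0 := Nat.le_zero.mp hrank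
    exact decomp_trivial (Module.finrank_zero_iff.mp this) ω f
  | succ N ih =>
    intro V₂ _ _ _ ω f hrank halt hnd hself
    by_cases hss : Subsingleton V₂
    · exact decomp_trivial hss ω f
    haveI : Nontrivial V₂ := not_subsingleton_iff_nontrivial.mp hss
    haveI : Nontrivial (Module.End K V₂) := by
      obtain ⟨z, hz⟩ := exists_ne (0 : V₂)
      refine ⟨1, 0, fun h => hz ?_⟩
      calc z = (1 : Module.End K V₂) z := rfl
        _ = (0 : Module.End K V₂) z := by rw [h]
        _ = 0 := rfl
    obtain ⟨v, hvmax⟩ := exists_max_order f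
    have hv0 : v ≠ 0 := by
      intro h0
      have h1 : Polynomial.aeval f (1 : K[X]) v = 0 := by
        rw [h0, map_zero]
      have h2 := hvmax 1 h1
      rw [map_one] at h2
      exact one_ne_zero h2
    set m := minpoly K f with hm
    have hint : IsIntegral K f := LinearMap.isIntegral f
    have hmonic : m.Monic := minpoly.monic hint
    have haevm : Polynomial.aeval f m = 0 := minpoly.aeval K f
    set d := m.natDegree with hd
    have hd1 : 1 ≤ d := minpoly.natDegree_pos hint
    -- the vectors v, f v, ..., f^(d-1) v are linearly independent
    set wfam : Fin d → V₂ := fun i => (f ^ (i : ℕ)) v with hwfam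
    have hli : LinearIndependent K wfam := by
      rw [Fintype.linearIndependent_iff]
      intro c hc i₀
      set p : K[X] := ∑ i : Fin d, Polynomial.monomial (i : ℕ) (c i) with hp
      have hpv : Polynomial.aeval f p v = 0 := by
        rw [hp]
        rw [map_sum]
        rw [LinearMap.sum_apply]
        rw [← hc]
        apply Finset.sum_congr rfl
        intro i _
        rw [Polynomial.aeval_monomial, Module.End.mul_apply, Module.algebraMap_end_apply]
      have hpz := hvmax p hpv
      have hpd : m ∣ p := minpoly.dvd K f hpz
      have hp0 : p = 0 := by
        by_contra hp0
        have := Polynomial.natDegree_le_of_dvd hpd hp0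
        have hdp : p.natDegree < d := by
          have h1 : p.natDegree ≤ d - 1 := by
            rw [hp]
            apply Polynomial.natDegree_sum_le_of_forall_le
            intro i _
            exact le_trans (Polynomial.natDegree_monomial_le (c i)) (by omega)
          omega
        omega
      have := congrArg (fun q => Polynomial.coeff q (i₀ : ℕ)) hp0
      simp only [hp, Polynomial.finset_sum_coeff, Polynomial.coeff_monomial,
        Polynomial.coeff_zero] at this
      rw [Finset.sum_eq_single i₀] at this
      · simpa using this
      · intro b _ hb
        have : ((b : Fin d) : ℕ) ≠ (i₀ : ℕ) := fun h => hb (Fin.ext h)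
        simp [this]
      · intro h
        exact absurd (Finset.mem_univ i₀) h
    -- construct the dual vector u
    set Wsp := Submodule.span K (Set.range wfam) with hWsp
    set Bw : Basis (Fin d) K ↥Wsp := Basis.span hli with hBw
    have hd1' : d - 1 < d := by omega
    obtain ⟨ξ, hξ⟩ := LinearMap.exists_extend (Bw.coord ⟨d-1, hd1'⟩)
    set u := (ω.toDual hnd).symm ξ with hu
    have hωu : ∀ y : V₂, ω u y = ξ y := by
      intro y
      have h1 : (ω.toDual hnd) u = ξ := LinearEquiv.apply_symm_apply _ _
      rw [← h1]
      rw [LinearMap.BilinForm.toDual_def]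
    have hufk : ∀ i : Fin d, ω u (wfam i) = if (i:ℕ) = d - 1 then 1 else 0 := by
      intro i
      rw [hωu]
      have h2 : wfam i = ↑(Bw i) := by rw [hBw]; exact congrArg Subtype.val (Basis.span_apply hli i).symm
      rw [h2]
      have h3 : ξ ↑(Bw i) = (ξ.comp Wsp.subtype) (Bw i) := rfl
      rw [h3, hξ]
      rw [Basis.coord_apply, Basis.repr_self_apply]
      simp [Fin.ext_iff]
    have hexp : ∀ r : K[X], r.natDegree < d →
        Polynomial.aeval f r v = ∑ i ∈ Finset.range d, r.coeff i • ((f ^ i) v) := by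
      intro r hr
      rw [Polynomial.aeval_eq_sum_range' hr]
      simp only [LinearMap.sum_apply, LinearMap.smul_apply]
    have hLval : ∀ r : K[X], r.natDegree < d →
        ω u (Polynomial.aeval f r v) = r.coeff (d-1) := by
      intro r hr
      rw [hexp r hr, map_sum]
      have h4 : ∀ i ∈ Finset.range d,
          ω u (r.coeff i • ((f ^ i) v)) = if i = d - 1 then r.coeff i else 0 := by
        intro i hi
        rw [map_smul, smul_eq_mul]
        have h5 := hufk ⟨i, Finset.mem_range.mp hi⟩
        rw [show wfam ⟨i, Finset.mem_range.mp hi⟩ = (f ^ i) v from rfl] at h5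
        rw [h5]
        by_cases h6 : i = d - 1 <;> simp [h6]
      rw [Finset.sum_congr rfl h4,
        Finset.sum_ite_eq' (Finset.range d) (d-1) (fun i => r.coeff i)]
      simp only [Finset.mem_range, if_pos hd1']
    have hkey : ∀ t : K[X],
        (∀ j : ℕ, ω u (Polynomial.aeval f (t * Polynomial.X ^ j) v) = 0) →
        Polynomial.aeval f t = 0 := by
      intro t ht
      have haev : Polynomial.aeval f t = Polynomial.aeval f (t %ₘ m) := by
        conv_lhs => rw [← Polynomial.modByMonic_add_div t m]
        rw [map_add, map_mul, haevm, zero_mul, add_zero]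
      by_cases h0 : t %ₘ m = 0
      · rw [haev, h0, map_zero]
      · exfalso
        have hdeg : (t %ₘ m).natDegree < d :=
          Polynomial.natDegree_lt_natDegree h0 (Polynomial.degree_modByMonic_lt t hmonic)
        set j := d - 1 - (t %ₘ m).natDegree with hj
        have h2 := ht j
        have h3 : Polynomial.aeval f (t * Polynomial.X ^ j) v
            = Polynomial.aeval f ((t %ₘ m) * Polynomial.X ^ j) v := by
          rw [map_mul, map_mul, haev]
        rw [h3] at h2
        have h4 : ((t %ₘ m) * Polynomial.X ^ j).natDegree < d := by
          rw [Polynomial.natDegree_mul h0 (pow_ne_zero j Polynomial.X_ne_zero),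
            Polynomial.natDegree_X_pow]
          omega
        rw [hLval _ h4] at h2
        have h5 : (t %ₘ m).natDegree + j = d - 1 := by omega
        rw [← h5, Polynomial.coeff_mul_X_pow] at h2
        exact Polynomial.leadingCoeff_ne_zero.mpr h0 h2
    set W := cyc f v with hW
    set W' := cyc f u with hW'
    set S := W ⊔ W' with hS
    have hWiso := cyc_isotropic hchar halt hself v
    have hW'iso := cyc_isotropic hchar halt hself u
    have hSnd : (ω.restrict S).Nondegenerate := by
      refine (LinearMap.IsRefl.nondegenerate_iff_separatingLeft
        (fun (a b : ↥S) h => halt.isRefl (a : V₂) (b : V₂) h)).mpr ?_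
      rintro ⟨x, hxS⟩ hx
      have hx' : ∀ y ∈ S, ω x y = 0 := by
        intro y hy
        have := hx ⟨y, hy⟩
        rwa [LinearMap.BilinForm.restrict_apply] at this
      obtain ⟨a, ha, b, hb, hab⟩ := Submodule.mem_sup.mp hxS
      obtain ⟨p, hp⟩ := mem_cyc.mp ha
      obtain ⟨q, hq⟩ := mem_cyc.mp hb
      have hbzero : Polynomial.aeval f q = 0 := by
        apply hkey
        intro j
        have hWj : Polynomial.aeval f (Polynomial.X ^ j) v ∈ W := mem_cyc.mpr ⟨_, rfl⟩
        have h1 : ω x (Polynomial.aeval f (Polynomial.X ^ j) v) = 0 :=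
          hx' _ (Submodule.mem_sup_left hWj)
        rw [← hab, map_add, LinearMap.add_apply] at h1
        have h2 : ω a (Polynomial.aeval f (Polynomial.X ^ j) v) = 0 :=
          hWiso a ha _ hWj
        rw [h2, zero_add] at h1
        rw [← hq, aeval_adjoint hself q, ← aeval_mul_apply] at h1
        exact h1
      have hb0 : b = 0 := by rw [← hq, hbzero]; rfl
      have hazero : Polynomial.aeval f p = 0 := by
        apply hkey
        intro j
        have hW'j : Polynomial.aeval f (Polynomial.X ^ j) u ∈ W' := mem_cyc.mpr ⟨_, rfl⟩
        have h1 : ω x (Polynomial.aeval f (Polynomial.X ^ j) u) = 0 :=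
          hx' _ (Submodule.mem_sup_right hW'j)
        rw [← hab, hb0, add_zero] at h1
        have h2 : ω (Polynomial.aeval f (Polynomial.X ^ j) u) a = 0 :=
          halt.isRefl _ _ h1
        rw [← hp, aeval_adjoint hself, ← aeval_mul_apply, mul_comm] at h2
        exact h2
      have ha0 : a = 0 := by rw [← hp, hazero]; rfl
      apply Subtype.ext
      show x = 0
      rw [← hab, ha0, hb0, add_zero]
    have hcomplS : IsCompl S (ω.orthogonal S) :=
      (LinearMap.BilinForm.restrict_nondegenerate_iff_isCompl_orthogonal halt.isRefl).mp hSnd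
    set U := ω.orthogonal S with hU
    have hUorth : ∀ x ∈ U, ∀ s ∈ S, ω s x = 0 := by
      intro x hxU s hs
      exact (LinearMap.BilinForm.mem_orthogonal_iff.mp hxU) s hs
    have hSinv : ∀ x ∈ S, f x ∈ S := by
      intro x hx
      obtain ⟨a, ha, b, hb, rfl⟩ := Submodule.mem_sup.mp hx
      rw [map_add]
      exact Submodule.add_mem _ (Submodule.mem_sup_left (cyc_invariant ha))
        (Submodule.mem_sup_right (cyc_invariant hb))
    have hUinv : ∀ x ∈ U, f x ∈ U := by
      intro x hx
      rw [hU, LinearMap.BilinForm.mem_orthogonal_iff]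
      intro s hs
      show ω s (f x) = 0
      rw [← hself]
      exact hUorth x hx (f s) (hSinv s hs)
    have hUnd : (ω.restrict U).Nondegenerate := by
      refine (LinearMap.IsRefl.nondegenerate_iff_separatingLeft
        (fun (a b : ↥U) h => halt.isRefl (a : V₂) (b : V₂) h)).mpr ?_
      rintro ⟨x, hxU⟩ hx
      have hx' : ∀ y ∈ U, ω x y = 0 := by
        intro y hy
        have := hx ⟨y, hy⟩
        rwa [LinearMap.BilinForm.restrict_apply] at this
      have hxS : ∀ s ∈ S, ω x s = 0 := fun s hs => halt.isRefl _ _ (hUorth x hxU s hs)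
      have hall : ∀ y : V₂, ω x y = 0 := by
        intro y
        have hy : y ∈ S ⊔ U := by rw [hcomplS.sup_eq_top]; trivial
        obtain ⟨s, hs, z, hz, rfl⟩ := Submodule.mem_sup.mp hy
        rw [map_add, hxS s hs, hx' z hz, add_zero]
      exact Subtype.ext (hnd.1 x hall)
    haveI : Nontrivial ↥S := by
      refine ⟨⟨v, Submodule.mem_sup_left (self_mem_cyc f v)⟩, 0, fun h => hv0 ?_⟩
      simpa using congrArg Subtype.val h
    have hfS : 0 < Module.finrank K ↥S := Module.finrank_pos_iff.mpr inferInstance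
    have hsum := Submodule.finrank_add_eq_of_isCompl hcomplS
    have hUle : Module.finrank K ↥U ≤ N := by omega
    obtain ⟨L', M', hL'inv, hM'inv, hL'iso, hM'iso, hcompl'⟩ :=
      ih ↥U (ω.restrict U) (f.restrict hUinv) hUle
        (fun z => by rw [LinearMap.BilinForm.restrict_apply]; exact halt _)
        hUnd
        (fun z y => by
          rw [LinearMap.BilinForm.restrict_apply, LinearMap.BilinForm.restrict_apply,
            LinearMap.restrict_apply, LinearMap.restrict_apply]
          exact hself _ _)
    set Lm := Submodule.map U.subtype L' with hLm
    set Mm := Submodule.map U.subtype M' with hMm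
    have hLinv : ∀ x ∈ W ⊔ Lm, f x ∈ W ⊔ Lm := by
      intro x hx
      obtain ⟨a, ha, b, hb, rfl⟩ := Submodule.mem_sup.mp hx
      obtain ⟨b', hb', rfl⟩ := Submodule.mem_map.mp hb
      rw [map_add]
      apply Submodule.add_mem
      · exact Submodule.mem_sup_left (cyc_invariant ha)
      · apply Submodule.mem_sup_right
        refine Submodule.mem_map.mpr ⟨f.restrict hUinv b', hL'inv b' hb', ?_⟩
        rw [LinearMap.restrict_apply]
        rfl
    have hMinv : ∀ x ∈ W' ⊔ Mm, f x ∈ W' ⊔ Mm := by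
      intro x hx
      obtain ⟨a, ha, b, hb, rfl⟩ := Submodule.mem_sup.mp hx
      obtain ⟨b', hb', rfl⟩ := Submodule.mem_map.mp hb
      rw [map_add]
      apply Submodule.add_mem
      · exact Submodule.mem_sup_left (cyc_invariant ha)
      · apply Submodule.mem_sup_right
        refine Submodule.mem_map.mpr ⟨f.restrict hUinv b', hM'inv b' hb', ?_⟩
        rw [LinearMap.restrict_apply]
        rfl
    have hLiso : ∀ x ∈ W ⊔ Lm, ∀ y ∈ W ⊔ Lm, ω x y = 0 := by
      intro x hx y hy
      obtain ⟨a, ha, b, hb, rfl⟩ := Submodule.mem_sup.mp hx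
      obtain ⟨a2, ha2, b2, hb2, rfl⟩ := Submodule.mem_sup.mp hy
      obtain ⟨bu, hbu, rfl⟩ := Submodule.mem_map.mp hb
      obtain ⟨bu2, hbu2, rfl⟩ := Submodule.mem_map.mp hb2
      simp only [map_add, LinearMap.add_apply]
      have t1 : ω a a2 = 0 := hWiso a ha a2 ha2
      have t2 : ω a (U.subtype bu2) = 0 := hUorth _ bu2.2 a (Submodule.mem_sup_left ha)
      have t3 : ω (U.subtype bu) a2 = 0 :=
        halt.isRefl _ _ (hUorth _ bu.2 a2 (Submodule.mem_sup_left ha2))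
      have t4 : ω (U.subtype bu) (U.subtype bu2) = 0 := by
        have := hL'iso bu hbu bu2 hbu2
        rwa [LinearMap.BilinForm.restrict_apply] at this
      rw [t1, t2, t3, t4]
      ring
    have hMiso : ∀ x ∈ W' ⊔ Mm, ∀ y ∈ W' ⊔ Mm, ω x y = 0 := by
      intro x hx y hy
      obtain ⟨a, ha, b, hb, rfl⟩ := Submodule.mem_sup.mp hx
      obtain ⟨a2, ha2, b2, hb2, rfl⟩ := Submodule.mem_sup.mp hy
      obtain ⟨bu, hbu, rfl⟩ := Submodule.mem_map.mp hb
      obtain ⟨bu2, hbu2, rfl⟩ := Submodule.mem_map.mp hb2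
      simp only [map_add, LinearMap.add_apply]
      have t1 : ω a a2 = 0 := hW'iso a ha a2 ha2
      have t2 : ω a (U.subtype bu2) = 0 := hUorth _ bu2.2 a (Submodule.mem_sup_right ha)
      have t3 : ω (U.subtype bu) a2 = 0 :=
        halt.isRefl _ _ (hUorth _ bu.2 a2 (Submodule.mem_sup_right ha2))
      have t4 : ω (U.subtype bu) (U.subtype bu2) = 0 := by
        have := hM'iso bu hbu bu2 hbu2
        rwa [LinearMap.BilinForm.restrict_apply] at this
      rw [t1, t2, t3, t4]
      ring
    have htop : (W ⊔ Lm) ⊔ (W' ⊔ Mm) = ⊤ := by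
      rw [sup_sup_sup_comm, hLm, hMm, ← Submodule.map_sup, hcompl'.sup_eq_top,
        Submodule.map_subtype_top]
      exact hcomplS.sup_eq_top
    refine ⟨W ⊔ Lm, W' ⊔ Mm, hLinv, hMinv, hLiso, hMiso, ⟨?_, codisjoint_iff.mpr htop⟩⟩
    rw [disjoint_iff, eq_bot_iff]
    rintro x hx
    have hxL := (Submodule.mem_inf.mp hx).1
    have hxM := (Submodule.mem_inf.mp hx).2
    rw [Submodule.mem_bot]
    apply hnd.1
    intro y
    have hy : y ∈ (W ⊔ Lm) ⊔ (W' ⊔ Mm) := by rw [htop]; trivial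
    obtain ⟨l, hl, mm, hmm, rfl⟩ := Submodule.mem_sup.mp hy
    rw [map_add, hLiso x hxL l hl, hMiso x hxM mm hmm, add_zero]

end Decomp

end SymplAux

set_option maxHeartbeats 1600000 in
open Matrix in
theorem symplectic_spectral_matrix_perfect
    {K : Type*} [Field K] [PerfectField K] (hchar : (2 : K) ≠ 0) (n : ℕ) (hn : 0 < n)
    (A : Matrix (Fin n ⊕ Fin n) (Fin n ⊕ Fin n) K)
    (Ω : Matrix (Fin n ⊕ Fin n) (Fin n ⊕ Fin n) K)
    (hΩ : Ω = Matrix.fromBlocks 0 1 (-1) 0)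
    (hA : A.transpose = Ω * A * Ω⁻¹) :
    ∃ C : Matrix (Fin n ⊕ Fin n) (Fin n ⊕ Fin n) K,
      C.transpose * Ω * C = Ω ∧
      ∃ B : Matrix (Fin n) (Fin n) K,
        C⁻¹ * A * C = Matrix.fromBlocks B 0 0 B.transpose := by
  classical
  subst hΩ
  set Om : Matrix (Fin n ⊕ Fin n) (Fin n ⊕ Fin n) K := Matrix.fromBlocks 0 1 (-1) 0 with hOm
  -- basic facts about Om
  have hΩ2 : Om * Om = -1 := by
    rw [hOm, Matrix.fromBlocks_multiply]
    have h1 : (-1 : Matrix (Fin n ⊕ Fin n) (Fin n ⊕ Fin n) K) = Matrix.fromBlocks (-1) 0 0 (-1) := by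
      ext (i | i) (j | j) <;>
        simp [Matrix.neg_apply, Matrix.one_apply]
    rw [h1]
    congr 1 <;> simp
  haveI : Invertible Om :=
    ⟨-Om, by rw [Matrix.neg_mul, hΩ2, neg_neg], by rw [Matrix.mul_neg, hΩ2, neg_neg]⟩
  have hΩdet : IsUnit Om.det := Matrix.isUnit_det_of_invertible Om
  have hΩinv : Om⁻¹ = -Om := Matrix.inv_eq_right_inv (by rw [Matrix.mul_neg, hΩ2, neg_neg])
  have hΩT : Omᵀ = -Om := by
    rw [hOm, Matrix.fromBlocks_transpose]
    ext (i | i) (j | j) <;>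
      simp [Matrix.neg_apply, Matrix.one_apply, eq_comm]
  -- the bilinear form
  set ωB : LinearMap.BilinForm K ((Fin n ⊕ Fin n) → K) := LinearMap.mk₂ K
      (fun x y => x ⬝ᵥ (Om *ᵥ y))
      (fun x x' y => by simp [add_dotProduct])
      (fun c x y => by simp [smul_dotProduct])
      (fun x y y' => by simp [Matrix.mulVec_add, dotProduct_add])
      (fun c x y => by simp [Matrix.mulVec_smul, dotProduct_smul])
    with hωB
  have hω_apply : ∀ x y : (Fin n ⊕ Fin n) → K, ωB x y = x ⬝ᵥ (Om *ᵥ y) := fun x y => rfl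
  have halt : ωB.IsAlt := by
    intro x
    show x ⬝ᵥ (Om *ᵥ x) = 0
    apply SymplAux.two_cancel hchar
    calc x ⬝ᵥ (Om *ᵥ x) = (x ᵥ* Om) ⬝ᵥ x := Matrix.dotProduct_mulVec x Om x
      _ = (Omᵀ *ᵥ x) ⬝ᵥ x := by rw [Matrix.mulVec_transpose]
      _ = ((-Om) *ᵥ x) ⬝ᵥ x := by rw [hΩT]
      _ = -((Om *ᵥ x) ⬝ᵥ x) := by rw [Matrix.neg_mulVec, neg_dotProduct]
      _ = -(x ⬝ᵥ (Om *ᵥ x)) := by rw [dotProduct_comm]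
  have hnd : ωB.Nondegenerate := by
    refine (LinearMap.IsRefl.nondegenerate_iff_separatingLeft halt.isRefl).mpr ?_
    intro x hx
    funext i
    have h1 : Om *ᵥ ((-Om) *ᵥ (Pi.single i 1)) = Pi.single i 1 := by
      rw [Matrix.mulVec_mulVec, Matrix.mul_neg, hΩ2, neg_neg, Matrix.one_mulVec]
    have h2 := hx ((-Om) *ᵥ (Pi.single i 1))
    rw [hω_apply, h1, dotProduct_single, mul_one] at h2
    exact h2
  set f : Module.End K ((Fin n ⊕ Fin n) → K) := Matrix.mulVecLin A with hf
  have hATΩ : Aᵀ * Om = Om * A := by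
    rw [hA, hΩinv]
    have h1 : (-Om) * Om = 1 := by rw [Matrix.neg_mul, hΩ2, neg_neg]
    rw [Matrix.mul_assoc (Om * A), h1, Matrix.mul_one]
  have hself : ∀ x y : (Fin n ⊕ Fin n) → K, ωB (f x) y = ωB x (f y) := by
    intro x y
    rw [hω_apply, hω_apply]
    show (A *ᵥ x) ⬝ᵥ (Om *ᵥ y) = x ⬝ᵥ (Om *ᵥ (A *ᵥ y))
    calc (A *ᵥ x) ⬝ᵥ (Om *ᵥ y) = (x ᵥ* Aᵀ) ⬝ᵥ (Om *ᵥ y) := by rw [Matrix.vecMul_transpose]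
      _ = x ⬝ᵥ (Aᵀ *ᵥ (Om *ᵥ y)) := (Matrix.dotProduct_mulVec x Aᵀ (Om *ᵥ y)).symm
      _ = x ⬝ᵥ ((Aᵀ * Om) *ᵥ y) := by rw [Matrix.mulVec_mulVec]
      _ = x ⬝ᵥ ((Om * A) *ᵥ y) := by rw [hATΩ]
      _ = x ⬝ᵥ (Om *ᵥ (A *ᵥ y)) := by rw [← Matrix.mulVec_mulVec]
  -- apply the decomposition theorem
  obtain ⟨L, M, hLinv, hMinv, hLiso, hMiso, hcompl⟩ :=
    SymplAux.decomp hchar (Module.finrank K ((Fin n ⊕ Fin n) → K)) ((Fin n ⊕ Fin n) → K) ωB f le_rfl halt hnd hself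
  have hrV : Module.finrank K ((Fin n ⊕ Fin n) → K) = n + n := by
    rw [Module.finrank_pi]
    simp
  -- the two pieces have dimension n
  have hker : ∀ l : ↥L, (∀ mm : ↥M, ωB ↑l ↑mm = 0) → l = 0 := by
    intro l hl
    apply Subtype.ext
    apply hnd.1
    intro y
    have hy : y ∈ L ⊔ M := by rw [hcompl.sup_eq_top]; trivial
    obtain ⟨a, ha, b, hb, rfl⟩ := Submodule.mem_sup.mp hy
    rw [map_add, hLiso ↑l l.2 a ha, hl ⟨b, hb⟩, add_zero]
  have hkerM : ∀ mm : ↥M, (∀ l : ↥L, ωB ↑l ↑mm = 0) → mm = 0 := by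
    intro mm hmm
    apply Subtype.ext
    apply hnd.1
    intro y
    have hy : y ∈ L ⊔ M := by rw [hcompl.sup_eq_top]; trivial
    obtain ⟨a, ha, b, hb, rfl⟩ := Submodule.mem_sup.mp hy
    rw [map_add, halt.isRefl _ _ (hmm ⟨a, ha⟩), hMiso ↑mm mm.2 b hb, add_zero]
  set P : ↥L →ₗ[K] Module.Dual K ↥M := ωB.compl₁₂ L.subtype M.subtype with hP
  set Q : ↥M →ₗ[K] Module.Dual K ↥L := (ωB.compl₁₂ L.subtype M.subtype).flip with hQ
  have hPinj : Function.Injective P := by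
    rw [← LinearMap.ker_eq_bot]
    apply LinearMap.ker_eq_bot'.mpr
    intro l hl0
    apply hker
    intro mm
    simpa [hP, LinearMap.compl₁₂_apply] using LinearMap.congr_fun hl0 mm
  have hQinj : Function.Injective Q := by
    rw [← LinearMap.ker_eq_bot]
    apply LinearMap.ker_eq_bot'.mpr
    intro mm hm0
    apply hkerM
    intro l
    simpa [hQ, LinearMap.compl₁₂_apply] using LinearMap.congr_fun hm0 l
  have hfr1 : Module.finrank K ↥L ≤ Module.finrank K ↥M :=
    le_trans (LinearMap.finrank_le_finrank_of_injective hPinj)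
      (le_of_eq Subspace.dual_finrank_eq)
  have hfr2 : Module.finrank K ↥M ≤ Module.finrank K ↥L :=
    le_trans (LinearMap.finrank_le_finrank_of_injective hQinj)
      (le_of_eq Subspace.dual_finrank_eq)
  have hsumLM := Submodule.finrank_add_eq_of_isCompl hcompl
  rw [hrV] at hsumLM
  have hLn : Module.finrank K ↥L = n := by omega
  have hMn : Module.finrank K ↥M = n := by omega
  -- bases
  set bL : Basis (Fin n) K ↥L := (Module.finBasis K ↥L).reindex (finCongr hLn) with hbL
  set eM : ↥M ≃ₗ[K] Module.Dual K ↥L :=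
    LinearMap.linearEquivOfInjective Q hQinj
      (by rw [hMn, Subspace.dual_finrank_eq, hLn]) with heM
  set bM : Basis (Fin n) K ↥M := bL.dualBasis.map eM.symm with hbM
  have hQbM : ∀ k : Fin n, Q (bM k) = bL.dualBasis k := by
    intro k
    rw [hbM, Basis.map_apply]
    calc Q (eM.symm (bL.dualBasis k)) = eM (eM.symm (bL.dualBasis k)) :=
          (LinearMap.linearEquivOfInjective_apply hQinj _ _).symm
      _ = bL.dualBasis k := eM.apply_symm_apply _
  have hpair : ∀ j k : Fin n, ωB ↑(bL j) ↑(bM k) = if j = k then 1 else 0 := by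
    intro j k
    have h2 : ωB ↑(bL j) ↑(bM k) = Q (bM k) (bL j) := by
      rw [hQ, LinearMap.flip_apply, LinearMap.compl₁₂_apply]
      rfl
    rw [h2, hQbM k, Basis.dualBasis_apply_self]
  -- the matrix C
  set vec : (Fin n ⊕ Fin n) → ((Fin n ⊕ Fin n) → K) := Sum.elim (fun i => ↑(bL i)) (fun i => ↑(bM i)) with hvec
  set C : Matrix (Fin n ⊕ Fin n) (Fin n ⊕ Fin n) K := Matrix.of (fun i j => vec j i) with hC
  have hCentry : ∀ j k : (Fin n ⊕ Fin n), (Cᵀ * Om * C) j k = ωB (vec j) (vec k) := by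
    intro j k
    have h1 : ωB (vec j) (vec k) = ∑ i, vec j i * ∑ l, Om i l * vec k l := by
      rw [hω_apply]
      simp [dotProduct, Matrix.mulVec]
    rw [h1]
    calc (Cᵀ * Om * C) j k = ∑ l, (∑ i, Cᵀ j i * Om i l) * C l k := by
          simp only [Matrix.mul_apply]
      _ = ∑ l, ∑ i, vec j i * Om i l * vec k l := by
          simp only [Matrix.transpose_apply, hC, Matrix.of_apply, Finset.sum_mul]
      _ = ∑ i, ∑ l, vec j i * Om i l * vec k l := Finset.sum_comm
      _ = ∑ i, vec j i * ∑ l, Om i l * vec k l := by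
          simp only [mul_assoc, ← Finset.mul_sum]
  have hCsymp : Cᵀ * Om * C = Om := by
    ext j k
    rw [hCentry]
    rcases j with j | j <;> rcases k with k | k
    · rw [show vec (Sum.inl j) = ↑(bL j) from rfl, show vec (Sum.inl k) = ↑(bL k) from rfl]
      rw [hLiso ↑(bL j) (bL j).2 ↑(bL k) (bL k).2]
      simp [hOm]
    · rw [show vec (Sum.inl j) = ↑(bL j) from rfl, show vec (Sum.inr k) = ↑(bM k) from rfl]
      rw [hpair j k]
      simp [hOm, Matrix.one_apply]
    · rw [show vec (Sum.inr j) = ↑(bM j) from rfl, show vec (Sum.inl k) = ↑(bL k) from rfl]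
      have h3 : ωB ↑(bM j) ↑(bL k) = -(ωB ↑(bL k) ↑(bM j)) :=
        (LinearMap.IsAlt.neg halt _ _).symm
      rw [h3, hpair k j]
      simp [hOm, Matrix.neg_apply, Matrix.one_apply, eq_comm]
    · rw [show vec (Sum.inr j) = ↑(bM j) from rfl, show vec (Sum.inr k) = ↑(bM k) from rfl]
      rw [hMiso ↑(bM j) (bM j).2 ↑(bM k) (bM k).2]
      simp [hOm]
  -- the matrix of f on L
  have hfL : ∀ k : Fin n, A *ᵥ (↑(bL k) : (Fin n ⊕ Fin n) → K) ∈ L :=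
    fun k => hLinv _ (bL k).2
  have hfM : ∀ k : Fin n, A *ᵥ (↑(bM k) : (Fin n ⊕ Fin n) → K) ∈ M :=
    fun k => hMinv _ (bM k).2
  set Bmat : Matrix (Fin n) (Fin n) K :=
    Matrix.of (fun j k => (bL.repr ⟨A *ᵥ ↑(bL k), hfL k⟩) j) with hBmat
  have hsumL : ∀ k, A *ᵥ (↑(bL k) : (Fin n ⊕ Fin n) → K)
      = ∑ j, Bmat j k • (↑(bL j) : (Fin n ⊕ Fin n) → K) := by
    intro k
    have h1 := bL.sum_repr ⟨A *ᵥ ↑(bL k), hfL k⟩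
    have h2 := congrArg (Submodule.subtype L) h1
    rw [map_sum] at h2
    simp only [_root_.map_smul, Submodule.coe_subtype] at h2
    exact h2.symm
  have hDM : ∀ k : Fin n, A *ᵥ (↑(bM k) : (Fin n ⊕ Fin n) → K)
      = ∑ j, Bmat k j • (↑(bM j) : (Fin n ⊕ Fin n) → K) := by
    intro k
    set m1 : ↥M := ⟨A *ᵥ ↑(bM k), hfM k⟩ with hm1
    set m2 : ↥M := ∑ j, Bmat k j • bM j with hm2
    have hcoe2 : (↑m2 : (Fin n ⊕ Fin n) → K) = ∑ j, Bmat k j • (↑(bM j) : (Fin n ⊕ Fin n) → K) := by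
      rw [hm2]
      simp [Submodule.coe_sum, SetLike.val_smul]
    suffices h : m1 = m2 by
      rw [← hcoe2]
      exact congrArg Subtype.val h
    apply hQinj
    apply Basis.ext bL
    intro c
    show ωB ↑(bL c) ↑m1 = ωB ↑(bL c) ↑m2
    have e1 : ωB ↑(bL c) ↑m1 = Bmat k c := by
      rw [show (↑m1 : (Fin n ⊕ Fin n) → K) = A *ᵥ ↑(bM k) from rfl]
      have h3 : ωB (↑(bL c) : (Fin n ⊕ Fin n) → K) (A *ᵥ ↑(bM k))
          = ωB (A *ᵥ ↑(bL c)) ↑(bM k) := (hself ↑(bL c) ↑(bM k)).symm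
      rw [h3, hsumL c]
      simp only [map_sum, LinearMap.sum_apply, _root_.map_smul, LinearMap.smul_apply,
        smul_eq_mul, hpair]
      simp [mul_ite, Finset.sum_ite_eq']
    have e2 : ωB ↑(bL c) ↑m2 = Bmat k c := by
      rw [hcoe2]
      simp only [map_sum, _root_.map_smul, smul_eq_mul, hpair]
      simp [mul_ite, Finset.sum_ite_eq]
    rw [e1, e2]
  set G : Matrix (Fin n ⊕ Fin n) (Fin n ⊕ Fin n) K := Matrix.fromBlocks Bmat 0 0 Bmatᵀ with hG
  have hvecsum : ∀ k, A *ᵥ vec k = ∑ j, G j k • vec j := by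
    intro k
    rcases k with k | k
    · rw [show vec (Sum.inl k) = ↑(bL k) from rfl, hsumL k, Fintype.sum_sum_type]
      simp [hG, hvec]
    · rw [show vec (Sum.inr k) = ↑(bM k) from rfl, hDM k, Fintype.sum_sum_type]
      simp [hG, hvec, Matrix.transpose_apply]
  have hAC : A * C = C * G := by
    ext i k
    have hL1 : (A * C) i k = (A *ᵥ (vec k)) i := by
      rw [Matrix.mul_apply]
      rfl
    have hR1 : (C * G) i k = (∑ j, G j k • vec j) i := by
      rw [Matrix.mul_apply, Finset.sum_apply]
      exact Finset.sum_congr rfl (fun j _ => mul_comm _ _)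
    rw [hL1, hR1, hvecsum k]
  have hCdet : IsUnit C.det := by
    have h2 := congrArg Matrix.det hCsymp
    rw [Matrix.det_mul, Matrix.det_mul, Matrix.det_transpose] at h2
    have hOmdet0 : Om.det ≠ 0 := hΩdet.ne_zero
    apply isUnit_iff_ne_zero.mpr
    intro h0
    rw [h0, zero_mul, zero_mul] at h2
    exact hOmdet0 h2.symm
  refine ⟨C, hCsymp, Bmat, ?_⟩
  calc C⁻¹ * A * C = C⁻¹ * (A * C) := by rw [Matrix.mul_assoc]
    _ = C⁻¹ * (C * G) := by rw [hAC]
    _ = (C⁻¹ * C) * G := by rw [Matrix.mul_assoc]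
    _ = G := by rw [Matrix.nonsing_inv_mul C hCdet, Matrix.one_mul]
    _ = Matrix.fromBlocks Bmat 0 0 Bmatᵀ := by rw [hG]
end
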